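/- arXiv:1411.0505 — 5 statements merged into one kernel-verified Lean document; each statement's English description precedes it below -/
import Mathlib

section
/- Either the set D of primitive Matchings generated by D₁ and D₂ is finite, in which case K₁+K₂ is a self-similar set satisfying K₁+K₂ = ⋃_{w∈D} φ_w(K₁+K₂); or D is infinite, in which case K₁+K₂ = closure( ⋃_{w∈D} φ_w(K₁+K₂) ), i.e. K₁+K₂ is the unique attractor of the infinite iterated function system {φ_w : w ∈ D}. -/
open Finset Pointwise

/-- The block `(0,…,0, β^k * a)` of length `k` associated to the similitude
`x ↦ x/β^k + a`. -/
noncomputable def digitBlock (β : ℝ) (k : ℕ) (a : ℝ) : List ℝ :=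
  List.replicate (k - 1) 0 ++ [β ^ k * a]

/-- `w` is a Matching generated by the digital sets `P` and `Q`: it is the coordinatewise
sum of a concatenation of blocks from `P` and a concatenation of blocks from `Q`
having the same total length as `w`. -/
def IsMatching {n m : ℕ} (P : Fin n → List ℝ) (Q : Fin m → List ℝ) (w : List ℝ) : Prop :=
  ∃ (is : List (Fin n)) (js : List (Fin m)),
    is ≠ [] ∧ js ≠ [] ∧
    (is.map P).flatten.length = w.length ∧
    (js.map Q).flatten.length = w.length ∧
    w = List.zipWith (· + ·) (is.map P).flatten (js.map Q).flatten

/-- A Matching is primitive if it is not a concatenation of two or more shorter Matchings. -/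
def IsPrimMatching {n m : ℕ} (P : Fin n → List ℝ) (Q : Fin m → List ℝ) (w : List ℝ) : Prop :=
  IsMatching P Q w ∧
    ¬ ∃ u v : List ℝ, u ≠ [] ∧ v ≠ [] ∧ IsMatching P Q u ∧ IsMatching P Q v ∧ w = u ++ v

/-- The value `Σ_{i=1}^{L} c_i β^{-i}` of the block `w = (c_1,…,c_L)` in base `β`. -/
noncomputable def blockVal (β : ℝ) (w : List ℝ) : ℝ :=
  ∑ i : Fin w.length, w.get i / β ^ (i.1 + 1)

/-- The similitude `φ_w(x) = x/β^{|w|} + Σ_i c_i β^{-i}` associated to a block `w`. -/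
noncomputable def phiBlock (β : ℝ) (w : List ℝ) (x : ℝ) : ℝ :=
  x / β ^ w.length + blockVal β w

/-- `x : ℕ → ℝ` (indexed from 0, representing `(x_k)_{k ≥ 1}`) is the infinite
concatenation of the nonempty blocks `W 0, W 1, …`. -/
def IsConcatSeq (W : ℕ → List ℝ) (x : ℕ → ℝ) : Prop :=
  (∀ t, W t ≠ []) ∧
    ∀ (t : ℕ) (i : Fin (W t).length),
      x ((∑ s ∈ Finset.range t, (W s).length) + i) = (W t).get i

/-- `x` is an infinite concatenation of blocks from the family `Ws`. -/
def IsInfConcatFrom (Ws : Set (List ℝ)) (x : ℕ → ℝ) : Prop :=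
  ∃ W : ℕ → List ℝ, (∀ t, W t ∈ Ws) ∧ IsConcatSeq W x

/-- The value `Σ_{k=1}^{∞} x_k β^{-k}` of a sequence (indexed from 0). -/
noncomputable def seqVal (β : ℝ) (x : ℕ → ℝ) : ℝ :=
  ∑' k : ℕ, x k / β ^ (k + 1)

/-- The set `E` of values of infinite concatenations of Matchings. -/
def Eset {n m : ℕ} (β : ℝ) (P : Fin n → List ℝ) (Q : Fin m → List ℝ) : Set ℝ :=
  {z | ∃ x : ℕ → ℝ, IsInfConcatFrom {w | IsMatching P Q w} x ∧ z = seqVal β x}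

/-- `a` is a coding: the coordinatewise sum of an infinite concatenation of blocks from
`P` and an infinite concatenation of blocks from `Q`. -/
def IsCoding {n m : ℕ} (P : Fin n → List ℝ) (Q : Fin m → List ℝ) (a : ℕ → ℝ) : Prop :=
  ∃ x y : ℕ → ℝ, IsInfConcatFrom (Set.range P) x ∧ IsInfConcatFrom (Set.range Q) y ∧
    ∀ k, a k = x k + y k

/-- The set `C` of codings having a tail containing no segment that is a Matching. -/
def Cset {n m : ℕ} (P : Fin n → List ℝ) (Q : Fin m → List ℝ) : Set (ℕ → ℝ) :=
  {a | IsCoding P Q a ∧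
    ∃ N : ℕ, ∀ j ≥ N, ∀ l : ℕ, 1 ≤ l →
      ¬ IsMatching P Q (List.ofFn fun i : Fin l => a (j + i))}

lemma blockVal_nil (β : ℝ) : blockVal β [] = 0 := by simp [blockVal]

lemma blockVal_cons (β c : ℝ) (t : List ℝ) :
    blockVal β (c :: t) = c / β + blockVal β t / β := by
  unfold blockVal
  show (∑ i : Fin (t.length + 1), (c :: t).get i / β ^ (i.1 + 1)) = _
  rw [Fin.sum_univ_succ, Finset.sum_div]
  simp [pow_succ, div_div, mul_comm]

lemma blockVal_append (β : ℝ) (u v : List ℝ) :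
    blockVal β (u ++ v) = blockVal β u + blockVal β v / β ^ u.length := by
  induction u with
  | nil => simp [blockVal_nil]
  | cons c u ih =>
      rw [List.cons_append, blockVal_cons, blockVal_cons, ih, add_div, div_div,
        List.length_cons, pow_succ]
      ring

lemma phi_nil (β x : ℝ) : phiBlock β [] x = x := by simp [phiBlock, blockVal_nil]

lemma phi_append (β : ℝ) (u v : List ℝ) (x : ℝ) :
    phiBlock β (u ++ v) x = phiBlock β u (phiBlock β v x) := by
  simp only [phiBlock, List.length_append, blockVal_append, pow_add, add_div, div_div]
  ring

lemma blockVal_zipWith (β : ℝ) : ∀ (u v : List ℝ), u.length = v.length →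
    blockVal β (List.zipWith (· + ·) u v) = blockVal β u + blockVal β v := by
  intro u
  induction u with
  | nil => intro v hv; simp [blockVal_nil, (List.length_eq_zero_iff.mp hv.symm)]
  | cons c u ih =>
      rintro (_ | ⟨d, v⟩) hv
      · simp at hv
      · simp only [List.zipWith_cons_cons, blockVal_cons,
          ih v (by simpa using hv), add_div]
        ring

lemma phi_zip (β : ℝ) {u v : List ℝ} (h : u.length = v.length) (x y : ℝ) :
    phiBlock β (List.zipWith (· + ·) u v) (x + y) = phiBlock β u x + phiBlock β v y := by
  simp only [phiBlock, List.length_zipWith, h, min_self, blockVal_zipWith β u v h, add_div]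
  ring

lemma blockVal_rep (β : ℝ) (j : ℕ) (c : ℝ) :
    blockVal β (List.replicate j 0 ++ [c]) = c / β ^ (j + 1) := by
  induction j with
  | zero => simp [blockVal_cons, blockVal_nil]
  | succ j ih =>
      rw [List.replicate_succ, List.cons_append, blockVal_cons, ih]
      simp [div_div, pow_succ, mul_comm]

lemma digitBlock_length {k : ℕ} (hk : 0 < k) (β a : ℝ) :
    (digitBlock β k a).length = k := by
  simp [digitBlock]; omega

lemma blockVal_digitBlock {β : ℝ} (hβ : β ≠ 0) {k : ℕ} (hk : 0 < k) (a : ℝ) :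
    blockVal β (digitBlock β k a) = a := by
  rw [digitBlock, blockVal_rep, show k - 1 + 1 = k by omega]
  field_simp

lemma phi_digitBlock {β : ℝ} (hβ : β ≠ 0) {k : ℕ} (hk : 0 < k) (a x : ℝ) :
    phiBlock β (digitBlock β k a) x = x / β ^ k + a := by
  rw [phiBlock, digitBlock_length hk, blockVal_digitBlock hβ hk]

section family
variable {β : ℝ} {n : ℕ} {P : Fin n → List ℝ} {K : Set ℝ}

lemma inv_flatten (hP : ∀ i, phiBlock β (P i) '' K ⊆ K) :
    ∀ is : List (Fin n), phiBlock β (is.map P).flatten '' K ⊆ K := by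
  intro is
  induction is with
  | nil => rintro z ⟨s, hs, rfl⟩; simpa [phi_nil] using hs
  | cons i is ih =>
      rintro z ⟨s, hs, rfl⟩
      rw [List.map_cons, List.flatten_cons, phi_append]
      exact hP i ⟨_, ih ⟨s, hs, rfl⟩, rfl⟩

lemma flatten_len_pos (hP : ∀ i : Fin n, 1 ≤ (P i).length) {is : List (Fin n)}
    (h : is ≠ []) : 1 ≤ ((is.map P).flatten).length := by
  cases is with
  | nil => exact absurd rfl h
  | cons i is =>
      rw [List.map_cons, List.flatten_cons, List.length_append]
      have := hP i; omega

lemma coding (hstep : ∀ x ∈ K, ∃ i, x ∈ phiBlock β (P i) '' K)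
    (hlen : ∀ i : Fin n, 1 ≤ (P i).length) :
    ∀ (L : ℕ) (x : ℝ), x ∈ K → ∃ is : List (Fin n), is ≠ [] ∧
      L ≤ ((is.map P).flatten).length ∧ x ∈ phiBlock β ((is.map P).flatten) '' K := by
  intro L
  induction L with
  | zero =>
      intro x hx
      obtain ⟨i, hi⟩ := hstep x hx
      exact ⟨[i], by simp, by simp, by simpa using hi⟩
  | succ L ih =>
      intro x hx
      obtain ⟨is, hne, hlenL, x', hx'K, hx'⟩ := ih x hx
      obtain ⟨i, x'', hx''K, hx''⟩ := hstep x' hx'K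
      refine ⟨is ++ [i], by simp, ?_, ?_⟩
      · rw [List.map_append, List.flatten_append, List.length_append]
        have := hlen i
        simp only [List.map_cons, List.map_nil, List.flatten_cons, List.flatten_nil,
          List.append_nil]
        omega
      · refine ⟨x'', hx''K, ?_⟩
        rw [List.map_append, List.flatten_append, phi_append]
        simp only [List.map_cons, List.map_nil, List.flatten_cons, List.flatten_nil,
          List.append_nil]
        rw [hx'', hx']

lemma rep_flatten_len (is : List (Fin n)) :
    ∀ c : ℕ, ((((List.replicate c is).flatten).map P).flatten).length
      = c * ((is.map P).flatten).length := by
  intro c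
  induction c with
  | zero => simp
  | succ c ih =>
      rw [List.replicate_succ, List.flatten_cons, List.map_append, List.flatten_append,
        List.length_append, ih]
      ring

end family

lemma phi_dist {β : ℝ} (hβ : 0 < β) (u : List ℝ) (s t : ℝ) :
    dist (phiBlock β u s) (phiBlock β u t) = dist s t / β ^ u.length := by
  rw [Real.dist_eq, Real.dist_eq, phiBlock, phiBlock]
  rw [show s / β ^ u.length + blockVal β u - (t / β ^ u.length + blockVal β u)
      = (s - t) / β ^ u.length by ring]
  rw [abs_div, abs_of_pos (pow_pos hβ _)]

section main
variable {β : ℝ} {n m : ℕ} {P : Fin n → List ℝ} {Q : Fin m → List ℝ} {K₁ K₂ : Set ℝ}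

lemma match_inv (hi₁ : ∀ i, phiBlock β (P i) '' K₁ ⊆ K₁)
    (hi₂ : ∀ j, phiBlock β (Q j) '' K₂ ⊆ K₂)
    {w : List ℝ} (hw : IsMatching P Q w) :
    phiBlock β w '' (K₁ + K₂) ⊆ K₁ + K₂ := by
  obtain ⟨is, js, _, _, hl1, hl2, hweq⟩ := hw
  rintro z ⟨s, hs, rfl⟩
  obtain ⟨x, hx, y, hy, rfl⟩ := Set.mem_add.mp hs
  rw [hweq, phi_zip β (hl1.trans hl2.symm)]
  exact Set.add_mem_add (inv_flatten hi₁ is ⟨x, hx, rfl⟩) (inv_flatten hi₂ js ⟨y, hy, rfl⟩)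

lemma decomp (hi₁ : ∀ i, phiBlock β (P i) '' K₁ ⊆ K₁)
    (hi₂ : ∀ j, phiBlock β (Q j) '' K₂ ⊆ K₂)
    (hPlen : ∀ i : Fin n, 1 ≤ (P i).length) :
    ∀ (L : ℕ) (w : List ℝ), w.length ≤ L → IsMatching P Q w →
      ∃ w₁ rest, IsPrimMatching P Q w₁ ∧ w = w₁ ++ rest ∧
        phiBlock β rest '' (K₁ + K₂) ⊆ K₁ + K₂ := by
  intro L
  induction L with
  | zero =>
      intro w hw hmatch
      exfalso
      obtain ⟨is, js, hisne, _, hlen1, _, _⟩ := hmatch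
      have := flatten_len_pos hPlen hisne
      omega
  | succ L ih =>
      intro w hwL hmatch
      by_cases hdec : ∃ u v : List ℝ, u ≠ [] ∧ v ≠ [] ∧ IsMatching P Q u ∧
          IsMatching P Q v ∧ w = u ++ v
      · obtain ⟨u, v, hu, hv, hmu, hmv, rfl⟩ := hdec
        have hvlen : 1 ≤ v.length := List.length_pos_iff.mpr hv
        have hulen : u.length ≤ L := by
          rw [List.length_append] at hwL; omega
        obtain ⟨w₁, rest, hp, hueq, hrest⟩ := ih u hulen hmu
        refine ⟨w₁, rest ++ v, hp, by rw [hueq, List.append_assoc], ?_⟩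
        rintro z ⟨s, hs, rfl⟩
        rw [phi_append]
        exact hrest ⟨_, match_inv hi₁ hi₂ hmv ⟨s, hs, rfl⟩, rfl⟩
      · refine ⟨w, [], ⟨hmatch, hdec⟩, (List.append_nil w).symm, ?_⟩
        rintro z ⟨s, hs, rfl⟩
        rw [phi_nil]; exact hs

end main


/-- `K₁+K₂` is a self-similar set for the primitive Matchings if there are
finitely many of them, and is the attractor of the infinite iterated function system of
the primitive Matchings otherwise. -/
theorem statement0 (β : ℝ) (hβ : 1 < β) (n m : ℕ) (hn : 0 < n) (hm : 0 < m)
    (nv : Fin n → ℕ) (hnv : ∀ i, 0 < nv i) (a : Fin n → ℝ)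
    (mv : Fin m → ℕ) (hmv : ∀ j, 0 < mv j) (b : Fin m → ℝ)
    (K₁ K₂ : Set ℝ)
    (hK₁ne : K₁.Nonempty) (hK₁c : IsCompact K₁)
    (hK₁ : K₁ = ⋃ i : Fin n, (fun x => x / β ^ nv i + a i) '' K₁)
    (hK₂ne : K₂.Nonempty) (hK₂c : IsCompact K₂)
    (hK₂ : K₂ = ⋃ j : Fin m, (fun x => x / β ^ mv j + b j) '' K₂)
    (P : Fin n → List ℝ) (Q : Fin m → List ℝ)
    (hP : P = fun i => digitBlock β (nv i) (a i))
    (hQ : Q = fun j => digitBlock β (mv j) (b j))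
    (D : Set (List ℝ)) (hD : D = {w | IsPrimMatching P Q w}) :
    (D.Finite → K₁ + K₂ = ⋃ w ∈ D, phiBlock β w '' (K₁ + K₂)) ∧
    (D.Infinite → K₁ + K₂ = closure (⋃ w ∈ D, phiBlock β w '' (K₁ + K₂))) := by
  have hβ0 : (0:ℝ) < β := lt_trans one_pos hβ
  have hβne : β ≠ 0 := ne_of_gt hβ0
  have hPlen : ∀ i : Fin n, 1 ≤ (P i).length := by
    intro i; rw [hP]; simp only; rw [digitBlock_length (hnv i)]; exact hnv i
  have hQlen : ∀ j : Fin m, 1 ≤ (Q j).length := by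
    intro j; rw [hQ]; simp only; rw [digitBlock_length (hmv j)]; exact hmv j
  have hPphi : ∀ (i : Fin n) (x : ℝ), phiBlock β (P i) x = x / β ^ nv i + a i := by
    intro i x; rw [hP]; exact phi_digitBlock hβne (hnv i) _ x
  have hQphi : ∀ (j : Fin m) (y : ℝ), phiBlock β (Q j) y = y / β ^ mv j + b j := by
    intro j y; rw [hQ]; exact phi_digitBlock hβne (hmv j) _ y
  have hinv₁ : ∀ i, phiBlock β (P i) '' K₁ ⊆ K₁ := by
    intro i
    have hsub : (fun x => x / β ^ nv i + a i) '' K₁ ⊆ K₁ := by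
      conv_rhs => rw [hK₁]
      exact Set.subset_iUnion (fun i => (fun x => x / β ^ nv i + a i) '' K₁) i
    rintro z ⟨s, hs, rfl⟩
    rw [hPphi]; exact hsub ⟨s, hs, rfl⟩
  have hinv₂ : ∀ j, phiBlock β (Q j) '' K₂ ⊆ K₂ := by
    intro j
    have hsub : (fun y => y / β ^ mv j + b j) '' K₂ ⊆ K₂ := by
      conv_rhs => rw [hK₂]
      exact Set.subset_iUnion (fun j => (fun y => y / β ^ mv j + b j) '' K₂) j
    rintro z ⟨s, hs, rfl⟩
    rw [hQphi]; exact hsub ⟨s, hs, rfl⟩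
  have hstep₁ : ∀ x ∈ K₁, ∃ i, x ∈ phiBlock β (P i) '' K₁ := by
    intro x hx
    rw [hK₁] at hx
    obtain ⟨i, s, hs, hxeq⟩ := Set.mem_iUnion.mp hx
    exact ⟨i, s, hs, by rw [hPphi]; exact hxeq⟩
  have hstep₂ : ∀ y ∈ K₂, ∃ j, y ∈ phiBlock β (Q j) '' K₂ := by
    intro y hy
    rw [hK₂] at hy
    obtain ⟨j, s, hs, hyeq⟩ := Set.mem_iUnion.mp hy
    exact ⟨j, s, hs, by rw [hQphi]; exact hyeq⟩
  have hS : IsCompact (K₁ + K₂) := hK₁c.add hK₂c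
  have hTsub : (⋃ w ∈ D, phiBlock β w '' (K₁ + K₂)) ⊆ K₁ + K₂ := by
    refine Set.iUnion₂_subset fun w hw => ?_
    have hwM : IsMatching P Q w := by rw [hD] at hw; exact hw.1
    exact match_inv hinv₁ hinv₂ hwM
  have key : K₁ + K₂ ⊆ closure (⋃ w ∈ D, phiBlock β w '' (K₁ + K₂)) := by
    intro z hz
    rw [Metric.mem_closure_iff]
    intro ε hε
    obtain ⟨x, hx, y, hy, rfl⟩ := Set.mem_add.mp hz
    obtain ⟨C₁, hC₁⟩ := Metric.isBounded_iff.mp hK₁c.isBounded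
    obtain ⟨C₂, hC₂⟩ := Metric.isBounded_iff.mp hK₂c.isBounded
    have hC₁0 : 0 ≤ C₁ := by have := hC₁ hx hx; rwa [dist_self] at this
    have hC₂0 : 0 ≤ C₂ := by have := hC₂ hy hy; rwa [dist_self] at this
    obtain ⟨L, hL⟩ := pow_unbounded_of_one_lt ((C₁ + C₂) / ε) hβ
    have hLε : (C₁ + C₂) / β ^ L < ε := by
      rw [div_lt_iff₀ (pow_pos hβ0 L)]
      have h2 := (div_lt_iff₀ hε).mp hL
      linarith
    obtain ⟨is, hisne, hisL, x', hx'K, hx'⟩ := coding hstep₁ hPlen L x hx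
    obtain ⟨js, hjsne, hjsL, y', hy'K, hy'⟩ := coding hstep₂ hQlen L y hy
    set U := (is.map P).flatten with hU
    set V := (js.map Q).flatten with hV
    have hN₁ : 1 ≤ U.length := flatten_len_pos hPlen hisne
    have hN₂ : 1 ≤ V.length := flatten_len_pos hQlen hjsne
    set is' := (List.replicate V.length is).flatten with his'
    set js' := (List.replicate U.length js).flatten with hjs'
    set U' := (is'.map P).flatten with hU'
    set V' := (js'.map Q).flatten with hV'
    have hU'len : U'.length = V.length * U.length := rep_flatten_len is _
    have hV'len : V'.length = U.length * V.length := rep_flatten_len js _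
    obtain ⟨k₂, hk₂⟩ : ∃ k, V.length = k + 1 := ⟨V.length - 1, by omega⟩
    obtain ⟨k₁, hk₁⟩ : ∃ k, U.length = k + 1 := ⟨U.length - 1, by omega⟩
    have hU'split : U' = U ++ (((List.replicate k₂ is).flatten).map P).flatten := by
      rw [hU', his', hk₂, List.replicate_succ, List.flatten_cons, List.map_append,
        List.flatten_append]
    have hV'split : V' = V ++ (((List.replicate k₁ js).flatten).map Q).flatten := by
      rw [hV', hjs', hk₁, List.replicate_succ, List.flatten_cons, List.map_append,
        List.flatten_append]
    have hlen' : U'.length = V'.length := by rw [hU'len, hV'len, mul_comm]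
    set w₀ := List.zipWith (· + ·) U' V' with hw₀
    have hw₀len : w₀.length = U'.length := by
      rw [hw₀, List.length_zipWith, hlen', min_self]
    have hmatch : IsMatching P Q w₀ := by
      refine ⟨is', js', ?_, ?_, ?_, ?_, rfl⟩
      · rw [his', hk₂, List.replicate_succ, List.flatten_cons]
        intro h; exact hisne (List.append_eq_nil_iff.mp h).1
      · rw [hjs', hk₁, List.replicate_succ, List.flatten_cons]
        intro h; exact hjsne (List.append_eq_nil_iff.mp h).1
      · exact hw₀len.symm
      · rw [hw₀len, hlen']
    set p₁ := phiBlock β U' x' with hp₁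
    set p₂ := phiBlock β V' y' with hp₂
    have hq₁ : phiBlock β (((List.replicate k₂ is).flatten).map P).flatten x' ∈ K₁ :=
      inv_flatten hinv₁ _ ⟨x', hx'K, rfl⟩
    have hq₂ : phiBlock β (((List.replicate k₁ js).flatten).map Q).flatten y' ∈ K₂ :=
      inv_flatten hinv₂ _ ⟨y', hy'K, rfl⟩
    have hpow : β ^ L ≤ β ^ U.length := pow_le_pow_right₀ (le_of_lt hβ) hisL
    have hpow₂ : β ^ L ≤ β ^ V.length := pow_le_pow_right₀ (le_of_lt hβ) hjsL
    have hd₁ : dist x p₁ ≤ C₁ / β ^ L := by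
      have hrw : p₁ = phiBlock β U
          (phiBlock β (((List.replicate k₂ is).flatten).map P).flatten x') := by
        rw [hp₁, hU'split, phi_append]
      rw [hrw, ← hx', phi_dist hβ0]
      have h1 : dist x' (phiBlock β (((List.replicate k₂ is).flatten).map P).flatten x')
          ≤ C₁ := hC₁ hx'K hq₁
      calc dist x' _ / β ^ U.length ≤ C₁ / β ^ U.length := by gcongr
        _ ≤ C₁ / β ^ L := by gcongr
    have hd₂ : dist y p₂ ≤ C₂ / β ^ L := by
      have hrw : p₂ = phiBlock β V
          (phiBlock β (((List.replicate k₁ js).flatten).map Q).flatten y') := by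
        rw [hp₂, hV'split, phi_append]
      rw [hrw, ← hy', phi_dist hβ0]
      have h1 : dist y' (phiBlock β (((List.replicate k₁ js).flatten).map Q).flatten y')
          ≤ C₂ := hC₂ hy'K hq₂
      calc dist y' _ / β ^ V.length ≤ C₂ / β ^ V.length := by gcongr
        _ ≤ C₂ / β ^ L := by gcongr
    have hsum : p₁ + p₂ = phiBlock β w₀ (x' + y') := (phi_zip β hlen' x' y').symm
    have hmem : phiBlock β w₀ (x' + y') ∈ ⋃ w ∈ D, phiBlock β w '' (K₁ + K₂) := by
      obtain ⟨w₁, rest, hprim, hw₀eq, hrest⟩ :=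
        decomp hinv₁ hinv₂ hPlen w₀.length w₀ le_rfl hmatch
      rw [hw₀eq, phi_append]
      have hxy : x' + y' ∈ K₁ + K₂ := Set.add_mem_add hx'K hy'K
      have hr : phiBlock β rest (x' + y') ∈ K₁ + K₂ := hrest ⟨_, hxy, rfl⟩
      exact Set.mem_biUnion (by rw [hD]; exact hprim) ⟨_, hr, rfl⟩
    refine ⟨p₁ + p₂, by rw [hsum]; exact hmem, ?_⟩
    calc dist (x + y) (p₁ + p₂) ≤ dist x p₁ + dist y p₂ := dist_add_add_le _ _ _ _
      _ ≤ C₁ / β ^ L + C₂ / β ^ L := add_le_add hd₁ hd₂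
      _ = (C₁ + C₂) / β ^ L := (add_div _ _ _).symm
      _ < ε := hLε
  have keyeq : K₁ + K₂ = closure (⋃ w ∈ D, phiBlock β w '' (K₁ + K₂)) :=
    Set.Subset.antisymm key (closure_minimal hTsub hS.isClosed)
  constructor
  · intro hfin
    conv_lhs => rw [keyeq]
    have hcl : IsClosed (⋃ w ∈ D, phiBlock β w '' (K₁ + K₂)) := by
      apply Set.Finite.isClosed_biUnion hfin
      intro w _
      have hco : Continuous (phiBlock β w) := by
        show Continuous fun x => x / β ^ w.length + blockVal β w
        exact (continuous_id.div_const _).add continuous_const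
      exact ((hS.image hco)).isClosed
    exact hcl.closure_eq
  · intro _; exact keyeq
end

section
/- Assume the set of Matchings generated by D₁ and D₂ is infinite. Let (a_k) ∈ C and let ε > 0. Then there exists a sequence (b_k)_{k≥1} which is an infinite concatenation of Matchings such that |Σ_{k=1}^{∞} a_k β^{-k} − Σ_{k=1}^{∞} b_k β^{-k}| < ε. -/
open Finset Pointwise

section Aux

lemma list_sum_map_range {M : Type*} [AddCommMonoid M] (f : ℕ → M) (T : ℕ) :
    (((List.range T).map f).sum) = ∑ s ∈ Finset.range T, f s := by
  induction T with
  | zero => simp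
  | succ T ih =>
    rw [List.range_succ, List.map_append, List.sum_append, Finset.sum_range_succ, ih]
    simp

lemma length_flatten_map_range (W : ℕ → List ℝ) (T : ℕ) :
    (((List.range T).map W).flatten).length = ∑ s ∈ Finset.range T, (W s).length := by
  rw [List.length_flatten, List.map_map]
  exact list_sum_map_range _ T

lemma flatten_range_getD (W : ℕ → List ℝ) {t i : ℕ} (hi : i < (W t).length) {T : ℕ}
    (hT : t < T) :
    (((List.range T).map W).flatten).getD ((∑ s ∈ Finset.range t, (W s).length) + i) 0
      = (W t).get ⟨i, hi⟩ := by
  induction T with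
  | zero => omega
  | succ T ih =>
    rw [List.range_succ, List.map_append, List.flatten_append]
    rcases Nat.lt_or_ge t T with h | h
    · rw [List.getD_append]
      · exact ih h
      · rw [length_flatten_map_range]
        have h1 : (∑ s ∈ Finset.range t, (W s).length) + (W t).length
            = ∑ s ∈ Finset.range (t+1), (W s).length := (Finset.sum_range_succ _ t).symm
        have h2 : (∑ s ∈ Finset.range (t+1), (W s).length) ≤ ∑ s ∈ Finset.range T, (W s).length :=
          Finset.sum_le_sum_of_subset (Finset.range_subset_range.2 h)
        omega
    · have ht : t = T := by omega
      subst ht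
      rw [List.getD_append_right]
      · rw [length_flatten_map_range]
        simp only [List.map_cons, List.map_nil, List.flatten_cons, List.flatten_nil,
          List.append_nil]
        rw [Nat.add_sub_cancel_left, List.getD_eq_getElem _ _ hi]
        simp
      · rw [length_flatten_map_range]
        omega

lemma exists_block_index (W : ℕ → List ℝ) (hne : ∀ t, W t ≠ []) (k : ℕ) :
    ∃ t i, ∃ hi : i < (W t).length, k = (∑ s ∈ Finset.range t, (W s).length) + i := by
  classical
  set c : ℕ → ℕ := fun t => ∑ s ∈ Finset.range t, (W s).length with hc
  have hlen : ∀ t, 0 < (W t).length := fun t => List.length_pos_iff.2 (hne t)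
  have hck : ∀ t, t ≤ c t := by
    intro t
    calc t = ∑ _s ∈ Finset.range t, 1 := by simp
    _ ≤ c t := Finset.sum_le_sum fun s _ => hlen s
  set t := Nat.findGreatest (fun t => c t ≤ k) k with htdef
  have h0 : c 0 ≤ k := by simp [hc]
  have ht : c t ≤ k := Nat.findGreatest_spec (P := fun t => c t ≤ k) (Nat.zero_le k) h0
  have ht2 : k < c (t + 1) := by
    by_contra hcon
    push_neg at hcon
    have h1 : t + 1 ≤ k := le_trans (hck (t + 1)) hcon
    have := Nat.le_findGreatest (P := fun t => c t ≤ k) h1 hcon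
    omega
  have hsucc : c (t + 1) = c t + (W t).length := Finset.sum_range_succ _ t
  refine ⟨t, k - c t, by omega, ?_⟩
  have hct : (∑ s ∈ Finset.range t, (W s).length) = c t := rfl
  omega

noncomputable def concatDigits (W : ℕ → List ℝ) (k : ℕ) : ℝ :=
  (((List.range (k + 1)).map W).flatten).getD k 0

lemma isConcatSeq_concatDigits (W : ℕ → List ℝ) (hne : ∀ t, W t ≠ []) :
    IsConcatSeq W (concatDigits W) := by
  refine ⟨hne, fun t i => ?_⟩
  have hlen : ∀ s, 0 < (W s).length := fun s => List.length_pos_iff.2 (hne s)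
  have ht : t ≤ ∑ s ∈ Finset.range t, (W s).length := by
    calc t = ∑ _s ∈ Finset.range t, 1 := by simp
    _ ≤ _ := Finset.sum_le_sum fun s _ => hlen s
  exact flatten_range_getD W i.2 (by omega)

lemma concat_prefix_eq {W : ℕ → List ℝ} {x : ℕ → ℝ} (h : IsConcatSeq W x) (T k : ℕ)
    (hk : k < ∑ s ∈ Finset.range T, (W s).length) :
    (((List.range T).map W).flatten).getD k 0 = x k := by
  obtain ⟨t, i, hi, rfl⟩ := exists_block_index W h.1 k
  have htT : t < T := by
    by_contra hcon
    push_neg at hcon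
    have h2 : (∑ s ∈ Finset.range T, (W s).length) ≤ ∑ s ∈ Finset.range t, (W s).length :=
      Finset.sum_le_sum_of_subset (Finset.range_subset_range.2 hcon)
    omega
  rw [flatten_range_getD W hi htT]
  exact (h.2 t ⟨i, hi⟩).symm

lemma digit_bound {W : ℕ → List ℝ} {x : ℕ → ℝ} {M : ℝ} (h : IsConcatSeq W x)
    (hM : ∀ t, ∀ e ∈ W t, |e| ≤ M) (k : ℕ) : |x k| ≤ M := by
  obtain ⟨t, i, hi, rfl⟩ := exists_block_index W h.1 k
  rw [h.2 t ⟨i, hi⟩]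
  exact hM t _ (List.get_mem _ _)

lemma mem_digitBlock {β : ℝ} {k : ℕ} {c e : ℝ} (h : e ∈ digitBlock β k c) :
    e = 0 ∨ e = β ^ k * c := by
  unfold digitBlock at h
  rcases List.mem_append.1 h with h | h
  · exact Or.inl (List.eq_of_mem_replicate h)
  · simp only [List.mem_singleton] at h
    exact Or.inr h

lemma summable_digits {β : ℝ} (hβ : 1 < β) {u : ℕ → ℝ} {M : ℝ} (hu : ∀ k, |u k| ≤ M) :
    Summable (fun k => u k / β ^ (k + 1)) := by
  have hβ0 : 0 < β := lt_trans one_pos hβ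
  have h1 : (1 : ℝ) / β < 1 := by rw [div_lt_one hβ0]; exact hβ
  have h0 : (0 : ℝ) ≤ 1 / β := by positivity
  have hg : Summable (fun k : ℕ => (M * (1 / β)) * (1 / β) ^ k) :=
    (summable_geometric_of_lt_one h0 h1).mul_left _
  apply Summable.of_norm_bounded hg
  intro k
  have hβne : β ≠ 0 := ne_of_gt hβ0
  have hb : (M * (1 / β)) * (1 / β) ^ k = M / β ^ (k + 1) := by
    rw [pow_succ, one_div_pow]
    field_simp
  rw [hb, Real.norm_eq_abs, abs_div, abs_of_pos (pow_pos hβ0 (k + 1))]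
  gcongr
  exact hu k
end Aux

lemma concatseq_head_getD {W : ℕ → List ℝ} {x : ℕ → ℝ} (h : IsConcatSeq W x) {k : ℕ}
    (hk : k < (W 0).length) : x k = ((W 0).getD k 0) := by
  have h1 := concat_prefix_eq h 1 k (by simpa using hk)
  have h2 : ((List.range 1).map W).flatten = W 0 := by simp [List.range_succ]
  rw [h2] at h1
  exact h1.symm

/-- if there are infinitely many Matchings, any coding in `C` can be
approximated in value, to within any `ε > 0`, by an infinite concatenation of Matchings. -/
theorem statement2 (β : ℝ) (hβ : 1 < β) (n m : ℕ) (hn : 0 < n) (hm : 0 < m)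
    (nv : Fin n → ℕ) (hnv : ∀ i, 0 < nv i) (a : Fin n → ℝ)
    (mv : Fin m → ℕ) (hmv : ∀ j, 0 < mv j) (b : Fin m → ℝ)
    (P : Fin n → List ℝ) (Q : Fin m → List ℝ)
    (hP : P = fun i => digitBlock β (nv i) (a i))
    (hQ : Q = fun j => digitBlock β (mv j) (b j))
    (hinf : {w : List ℝ | IsMatching P Q w}.Infinite)
    (aseq : ℕ → ℝ) (ha : aseq ∈ Cset P Q)
    (ε : ℝ) (hε : 0 < ε) :
    ∃ bseq : ℕ → ℝ, IsInfConcatFrom {w : List ℝ | IsMatching P Q w} bseq ∧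
      |seqVal β aseq - seqVal β bseq| < ε := by
  have hβ0 : 0 < β := lt_trans one_pos hβ
  have hβne : β ≠ 0 := ne_of_gt hβ0
  have h1 : (1 : ℝ) / β < 1 := by rw [div_lt_one hβ0]; exact hβ
  have h0 : (0 : ℝ) ≤ 1 / β := by positivity
  obtain ⟨⟨x, y, hx, hy, hxy⟩, -⟩ := ha
  obtain ⟨W, hWmem, hWcs⟩ := hx
  obtain ⟨V, hVmem, hVcs⟩ := hy
  choose idx hidx using hWmem
  choose jdx hjdx using hVmem
  have hlenP : ∀ i, (P i).length = nv i := by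
    intro i
    rw [hP]
    simp only [digitBlock, List.length_append, List.length_replicate, List.length_singleton]
    have := hnv i; omega
  have hlenQ : ∀ j, (Q j).length = mv j := by
    intro j
    rw [hQ]
    simp only [digitBlock, List.length_append, List.length_replicate, List.length_singleton]
    have := hmv j; omega
  have hWlen : ∀ t, (W t).length = nv (idx t) := fun t => by rw [← hidx t, hlenP]
  have hVlen : ∀ t, (V t).length = mv (jdx t) := fun t => by rw [← hjdx t, hlenQ]
  -- digit bounds
  set Mx : ℝ := ∑ i : Fin n, |β ^ (nv i) * a i| with hMxdef
  set My : ℝ := ∑ j : Fin m, |β ^ (mv j) * b j| with hMydef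
  have hMx0 : 0 ≤ Mx := Finset.sum_nonneg fun _ _ => abs_nonneg _
  have hMy0 : 0 ≤ My := Finset.sum_nonneg fun _ _ => abs_nonneg _
  have hPentry : ∀ (i : Fin n), ∀ e ∈ P i, |e| ≤ Mx := by
    intro i e he
    rw [hP] at he
    rcases mem_digitBlock he with rfl | rfl
    · simpa using hMx0
    · exact Finset.single_le_sum (f := fun i => |β ^ (nv i) * a i|)
        (fun i _ => abs_nonneg _) (Finset.mem_univ i)
  have hQentry : ∀ (j : Fin m), ∀ e ∈ Q j, |e| ≤ My := by
    intro j e he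
    rw [hQ] at he
    rcases mem_digitBlock he with rfl | rfl
    · simpa using hMy0
    · exact Finset.single_le_sum (f := fun j => |β ^ (mv j) * b j|)
        (fun j _ => abs_nonneg _) (Finset.mem_univ j)
  have hflatP : ∀ (l : List (Fin n)), ∀ e ∈ (l.map P).flatten, |e| ≤ Mx := by
    intro l e he
    obtain ⟨w, hw, hew⟩ := List.mem_flatten.1 he
    obtain ⟨i, _, rfl⟩ := List.mem_map.1 hw
    exact hPentry i e hew
  have hflatQ : ∀ (l : List (Fin m)), ∀ e ∈ (l.map Q).flatten, |e| ≤ My := by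
    intro l e he
    obtain ⟨w, hw, hew⟩ := List.mem_flatten.1 he
    obtain ⟨j, _, rfl⟩ := List.mem_map.1 hw
    exact hQentry j e hew
  set M : ℝ := Mx + My with hMdef
  have hM0 : 0 ≤ M := by rw [hMdef]; linarith
  have haseqM : ∀ k, |aseq k| ≤ M := by
    intro k
    have hb1 : |x k| ≤ Mx := digit_bound hWcs (fun t e he => by
      rw [← hidx t] at he; exact hPentry _ e he) k
    have hb2 : |y k| ≤ My := digit_bound hVcs (fun t e he => by
      rw [← hjdx t] at he; exact hQentry _ e he) k
    rw [hxy k, hMdef]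
    exact le_trans (abs_add_le _ _) (add_le_add hb1 hb2)
  -- choose K
  set C : ℝ := 2 * M * ((1 / β) * (1 - 1 / β)⁻¹) with hCdef
  have hinv0 : (0 : ℝ) ≤ (1 - 1 / β)⁻¹ := by
    apply inv_nonneg.2; linarith
  have hC0 : 0 ≤ C := by
    rw [hCdef]; positivity
  obtain ⟨K0, hK0⟩ := exists_pow_lt_of_lt_one (show (0:ℝ) < ε / (C + 1) by positivity) h1
  set K := K0 + 1 with hKdef
  have hKpos : 1 ≤ K := by omega
  have hKpow : (1 / β) ^ K ≤ (1 / β) ^ K0 :=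
    pow_le_pow_of_le_one h0 (le_of_lt h1) (by omega)
  have hKε : C * (1 / β) ^ K < ε := by
    have hCC : C * (1 / β) ^ K ≤ (C + 1) * (1 / β) ^ K0 :=
      mul_le_mul (by linarith) hKpow (by positivity) (by linarith)
    have h2 : (C + 1) * (1 / β) ^ K0 < (C + 1) * (ε / (C + 1)) :=
      mul_lt_mul_of_pos_left hK0 (by linarith)
    rw [mul_div_cancel₀ ε (by linarith : C + 1 ≠ 0)] at h2
    linarith
  -- the construction
  set i0 : Fin n := idx 0 with hi0def
  set j0 : Fin m := jdx 0 with hj0def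
  set p : ℕ := ∑ s ∈ Finset.range K, nv (idx s) with hpdef
  set q : ℕ := ∑ s ∈ Finset.range K, mv (jdx s) with hqdef
  have hpW : p = ∑ s ∈ Finset.range K, (W s).length :=
    Finset.sum_congr rfl fun s _ => (hWlen s).symm
  have hqV : q = ∑ s ∈ Finset.range K, (V s).length :=
    Finset.sum_congr rfl fun s _ => (hVlen s).symm
  have hKp : K ≤ p := by
    rw [hpdef]
    calc K = ∑ _s ∈ Finset.range K, 1 := by simp
    _ ≤ _ := Finset.sum_le_sum fun s _ => hnv _
  have hKq : K ≤ q := by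
    rw [hqdef]
    calc K = ∑ _s ∈ Finset.range K, 1 := by simp
    _ ≤ _ := Finset.sum_le_sum fun s _ => hmv _
  set r : ℕ := nv i0 * mv j0 with hrdef
  have hr1 : 1 ≤ r := Nat.mul_pos (hnv _) (hmv _)
  set prefI : List (Fin n) := (List.range K).map idx with hprefIdef
  set prefJ : List (Fin m) := (List.range K).map jdx with hprefJdef
  set IS : List (Fin n) := prefI ++ ((List.replicate (r - 1) prefI).flatten
      ++ List.replicate (q * mv j0) i0) with hISdef
  set JS : List (Fin m) := prefJ ++ ((List.replicate (r - 1) prefJ).flatten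
      ++ List.replicate (p * nv i0) j0) with hJSdef
  have hsumP : ∀ l : List (Fin n), ((l.map P).flatten).length = (l.map nv).sum := by
    intro l
    rw [List.length_flatten, List.map_map]
    congr 1
    exact List.map_congr_left fun i _ => hlenP i
  have hsumQ : ∀ l : List (Fin m), ((l.map Q).flatten).length = (l.map mv).sum := by
    intro l
    rw [List.length_flatten, List.map_map]
    congr 1
    exact List.map_congr_left fun j _ => hlenQ j
  have hprefInv : (prefI.map nv).sum = p := by
    rw [hprefIdef, List.map_map]
    exact list_sum_map_range _ K
  have hprefJnv : (prefJ.map mv).sum = q := by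
    rw [hprefJdef, List.map_map]
    exact list_sum_map_range _ K
  set c : ℕ := (p + q) * r with hcdef
  obtain ⟨r', hr'⟩ : ∃ r', r = r' + 1 := ⟨r - 1, by omega⟩
  have hISlen : ((IS.map P).flatten).length = c := by
    rw [hsumP, hISdef, List.map_append, List.sum_append, List.map_append, List.sum_append,
      hprefInv, List.map_flatten, List.map_replicate, List.sum_flatten, List.map_replicate,
      List.sum_replicate, hprefInv, List.map_replicate, List.sum_replicate]
    have h6 : r - 1 = r' := by omega
    have h5 : (q * mv j0) * nv i0 = q * r := by rw [hrdef]; ring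
    rw [smul_eq_mul, smul_eq_mul, h6, h5, hcdef, hr']
    ring
  have hJSlen : ((JS.map Q).flatten).length = c := by
    rw [hsumQ, hJSdef, List.map_append, List.sum_append, List.map_append, List.sum_append,
      hprefJnv, List.map_flatten, List.map_replicate, List.sum_flatten, List.map_replicate,
      List.sum_replicate, hprefJnv, List.map_replicate, List.sum_replicate]
    have h6 : r - 1 = r' := by omega
    have h5 : (p * nv i0) * mv j0 = p * r := by rw [hrdef]; ring
    rw [smul_eq_mul, smul_eq_mul, h6, h5, hcdef, hr']
    ring
  set M1 : List ℝ := List.zipWith (· + ·) ((IS.map P).flatten) ((JS.map Q).flatten) with hM1def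
  have hM1len : M1.length = c := by
    rw [hM1def, List.length_zipWith, hISlen, hJSlen, min_self]
  have hppos : 0 < p := lt_of_lt_of_le hKpos hKp
  have hcpos : 0 < c := by
    rw [hcdef]; exact Nat.mul_pos (by omega) (by omega)
  have hprefIne : prefI ≠ [] := by
    have hl : prefI.length = K := by rw [hprefIdef]; simp
    intro h
    rw [h] at hl
    simp at hl
  have hprefJne : prefJ ≠ [] := by
    have hl : prefJ.length = K := by rw [hprefJdef]; simp
    intro h
    rw [h] at hl
    simp at hl
  have hM1match : IsMatching P Q M1 := by
    refine ⟨IS, JS, ?_, ?_, ?_, ?_, hM1def⟩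
    · rw [hISdef]; exact List.append_ne_nil_of_left_ne_nil hprefIne _
    · rw [hJSdef]; exact List.append_ne_nil_of_left_ne_nil hprefJne _
    · rw [hISlen, hM1len]
    · rw [hJSlen, hM1len]
  set xw0 : List ℝ := ((List.replicate (mv j0) i0).map P).flatten with hxw0def
  set yw0 : List ℝ := ((List.replicate (nv i0) j0).map Q).flatten with hyw0def
  have hxw0len : xw0.length = r := by
    rw [hxw0def, hsumP, List.map_replicate, List.sum_replicate]
    simp only [smul_eq_mul, hrdef]
    ring
  have hyw0len : yw0.length = r := by
    rw [hyw0def, hsumQ, List.map_replicate, List.sum_replicate]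
    simp only [smul_eq_mul, hrdef]
  set w0 : List ℝ := List.zipWith (· + ·) xw0 yw0 with hw0def
  have hw0len : w0.length = r := by
    rw [hw0def, List.length_zipWith, hxw0len, hyw0len, min_self]
  have hw0match : IsMatching P Q w0 := by
    refine ⟨List.replicate (mv j0) i0, List.replicate (nv i0) j0, ?_, ?_, ?_, ?_, hw0def⟩
    · simp only [ne_eq, List.replicate_eq_nil_iff]
      exact (hmv j0).ne'
    · simp only [ne_eq, List.replicate_eq_nil_iff]
      exact (hnv i0).ne'
    · rw [← hxw0def, hxw0len, hw0len]
    · rw [← hyw0def, hyw0len, hw0len]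
  set W' : ℕ → List ℝ := fun t => if t = 0 then M1 else w0 with hW'def
  have hW'0 : W' 0 = M1 := by simp [hW'def]
  have hW'succ : ∀ t, W' (t + 1) = w0 := fun t => by simp [hW'def]
  have hM1ne : M1 ≠ [] := by
    intro h
    rw [h] at hM1len
    simp at hM1len
    omega
  have hw0ne : w0 ≠ [] := by
    intro h
    rw [h] at hw0len
    simp at hw0len
    omega
  have hW'ne : ∀ t, W' t ≠ [] := by
    intro t
    cases t with
    | zero => rw [hW'0]; exact hM1ne
    | succ t => rw [hW'succ]; exact hw0ne
  set bseq : ℕ → ℝ := concatDigits W' with hbseqdef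
  have hbcs : IsConcatSeq W' bseq := isConcatSeq_concatDigits W' hW'ne
  have hbmem : ∀ t, W' t ∈ {w : List ℝ | IsMatching P Q w} := by
    intro t
    cases t with
    | zero => rw [hW'0]; exact hM1match
    | succ t => rw [hW'succ]; exact hw0match
  refine ⟨bseq, ⟨W', hbmem, hbcs⟩, ?_⟩
  -- digit agreement below K
  have hpc : p ≤ c := by
    rw [hcdef]
    calc p ≤ (p + q) * 1 := by omega
    _ ≤ (p + q) * r := Nat.mul_le_mul_left _ hr1
  have hagree : ∀ k, k < K → bseq k = aseq k := by
    intro k hk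
    have hkc : k < c := by omega
    have hkM1 : k < (W' 0).length := by rw [hW'0, hM1len]; exact hkc
    have hb1 : bseq k = M1.getD k 0 := by
      have := concatseq_head_getD hbcs hkM1
      rw [hW'0] at this
      exact this
    have hkP : k < ((IS.map P).flatten).length := by rw [hISlen]; exact hkc
    have hkQ : k < ((JS.map Q).flatten).length := by rw [hJSlen]; exact hkc
    have hb2 : M1.getD k 0 = ((IS.map P).flatten).getD k 0 + ((JS.map Q).flatten).getD k 0 := by
      have hkM : k < M1.length := by rw [hM1len]; exact hkc
      rw [List.getD_eq_getElem _ _ hkM, List.getD_eq_getElem _ _ hkP,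
        List.getD_eq_getElem _ _ hkQ]
      simp only [hM1def, List.getElem_zipWith]
    have hxpref : ((IS.map P).flatten).getD k 0 = x k := by
      rw [hISdef, List.map_append, List.flatten_append]
      rw [List.getD_append _ _ _ _ (by
        rw [hsumP, hprefInv]
        omega)]
      have hPW : prefI.map P = (List.range K).map W := by
        rw [hprefIdef, List.map_map]
        exact List.map_congr_left fun s _ => hidx s
      rw [hPW]
      exact concat_prefix_eq hWcs K k (by rw [← hpW]; omega)
    have hypref : ((JS.map Q).flatten).getD k 0 = y k := by
      rw [hJSdef, List.map_append, List.flatten_append]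
      rw [List.getD_append _ _ _ _ (by
        rw [hsumQ, hprefJnv]
        omega)]
      have hQV : prefJ.map Q = (List.range K).map V := by
        rw [hprefJdef, List.map_map]
        exact List.map_congr_left fun s _ => hjdx s
      rw [hQV]
      exact concat_prefix_eq hVcs K k (by rw [← hqV]; omega)
    rw [hb1, hb2, hxpref, hypref, hxy k]
  -- digit bound for bseq
  have hzipbound : ∀ (l1 l2 : List ℝ), (∀ e ∈ l1, |e| ≤ Mx) → (∀ e ∈ l2, |e| ≤ My) →
      ∀ e ∈ List.zipWith (· + ·) l1 l2, |e| ≤ M := by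
    intro l1 l2 hb1 hb2 e he
    obtain ⟨k0, hk0, rfl⟩ := List.mem_iff_getElem.1 he
    rw [List.getElem_zipWith, hMdef]
    exact le_trans (abs_add_le _ _)
      (add_le_add (hb1 _ (List.getElem_mem _)) (hb2 _ (List.getElem_mem _)))
  have hbseqM : ∀ k, |bseq k| ≤ M := by
    refine digit_bound hbcs (fun t e he => ?_)
    cases t with
    | zero =>
      rw [hW'0, hM1def] at he
      exact hzipbound _ _ (hflatP IS) (hflatQ JS) e he
    | succ t =>
      rw [hW'succ, hw0def] at he
      exact hzipbound _ _ (by rw [hxw0def]; exact hflatP _) (by rw [hyw0def]; exact hflatQ _) e he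
  -- final estimate
  have hfa : Summable (fun k => aseq k / β ^ (k + 1)) := summable_digits hβ haseqM
  have hfb : Summable (fun k => bseq k / β ^ (k + 1)) := summable_digits hβ hbseqM
  set d : ℕ → ℝ := fun k => aseq k / β ^ (k + 1) - bseq k / β ^ (k + 1) with hddef
  have hdsum : Summable d := hfa.sub hfb
  have hval : seqVal β aseq - seqVal β bseq = ∑' k, d k := by
    rw [seqVal, seqVal, hddef]
    exact (Summable.tsum_sub hfa hfb).symm
  have hsplit := Summable.sum_add_tsum_nat_add K hdsum
  have hzero : ∑ i ∈ Finset.range K, d i = 0 := Finset.sum_eq_zero fun i hi => by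
    rw [hddef]
    simp only
    rw [hagree i (Finset.mem_range.1 hi)]
    ring
  have hgeo : HasSum (fun i : ℕ => (2 * M * (1 / β) ^ (K + 1)) * (1 / β) ^ i)
      ((2 * M * (1 / β) ^ (K + 1)) * (1 - 1 / β)⁻¹) :=
    (hasSum_geometric_of_lt_one h0 h1).mul_left _
  have htail : ‖∑' i : ℕ, d (i + K)‖ ≤ (2 * M * (1 / β) ^ (K + 1)) * (1 - 1 / β)⁻¹ := by
    apply tsum_of_norm_bounded hgeo
    intro i
    rw [hddef, Real.norm_eq_abs]
    simp only
    have h3 : |aseq (i + K) / β ^ (i + K + 1) - bseq (i + K) / β ^ (i + K + 1)|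
        ≤ 2 * M / β ^ (i + K + 1) := by
      rw [div_sub_div_same, abs_div, abs_of_pos (pow_pos hβ0 _)]
      have h4 : |aseq (i + K) - bseq (i + K)| ≤ 2 * M := by
        calc |aseq (i + K) - bseq (i + K)| ≤ |aseq (i + K)| + |bseq (i + K)| := abs_sub _ _
        _ ≤ 2 * M := by have := haseqM (i + K); have := hbseqM (i + K); linarith
      gcongr
    have h4 : 2 * M / β ^ (i + K + 1) = (2 * M * (1 / β) ^ (K + 1)) * (1 / β) ^ i := by
      have h5 : β ^ (i + K + 1) = β ^ (K + 1) * β ^ i := by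
        rw [← pow_add]
        congr 1
        omega
      rw [h5, one_div_pow, one_div_pow]
      field_simp
    exact h3.trans_eq h4
  have hest : |seqVal β aseq - seqVal β bseq| ≤ (2 * M * (1 / β) ^ (K + 1)) * (1 - 1 / β)⁻¹ := by
    rw [hval, ← hsplit, hzero, zero_add, ← Real.norm_eq_abs]
    exact htail
  have hfin : (2 * M * (1 / β) ^ (K + 1)) * (1 - 1 / β)⁻¹ = C * (1 / β) ^ K := by
    rw [hCdef, pow_succ]
    ring
  rw [hfin] at hest
  exact lt_of_le_of_lt hest hKε
end

section
/- If D₁ is homogeneous and D₂ is a multiplier set of D₁, then the set D of primitive Matchings generated by D₁ and D₂ is finite. -/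
open Finset Pointwise

/-- Auxiliary: length of a flatten of mapped blocks. -/
lemma aux_flatten_length {α : Type*} (g : α → List ℝ) (len : α → ℕ)
    (hg : ∀ x, (g x).length = len x) (l : List α) :
    ((l.map g).flatten).length = (l.map len).sum := by
  simp [List.length_flatten, List.map_map, Function.comp_def, hg]

/-- Auxiliary: a list sum of mapped values as a `Fin` sum. -/
lemma aux_sum_map_fin {α : Type*} (g : α → ℕ) (l : List α) :
    (l.map g).sum = ∑ i : Fin l.length, g (l.get i) := by
  conv_lhs => rw [← List.ofFn_get l]
  rw [List.map_ofFn, List.sum_ofFn]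
  rfl

/-- if `D₁` is homogeneous and `D₂` is a multiplier set of `D₁`, then the set
of primitive Matchings is finite. -/
theorem statement6 (β : ℝ) (hβ : 1 < β) (n m : ℕ) (hn : 0 < n) (hm : 0 < m)
    (nv : Fin n → ℕ) (hnv : ∀ i, 0 < nv i) (a : Fin n → ℝ)
    (mv : Fin m → ℕ) (hmv : ∀ j, 0 < mv j) (b : Fin m → ℝ)
    (P : Fin n → List ℝ) (Q : Fin m → List ℝ)
    (hP : P = fun i => digitBlock β (nv i) (a i))
    (hQ : Q = fun j => digitBlock β (mv j) (b j))
    (k : ℕ) (hhom : ∀ i, nv i = k)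
    (t : ℕ) (ht : 0 < t) (hmul : ∀ js : Fin t → Fin m, k ∣ ∑ s, mv (js s)) :
    {w : List ℝ | IsPrimMatching P Q w}.Finite := by
  -- basic facts
  have hk : 0 < k := (hhom ⟨0, hn⟩) ▸ hnv ⟨0, hn⟩
  have hPlen : ∀ i, (P i).length = k := by
    intro i; rw [hP]
    simp only [digitBlock, List.length_append, List.length_replicate,
      List.length_singleton, hhom i]
    omega
  have hQlen : ∀ j, (Q j).length = mv j := by
    intro j; rw [hQ]
    simp only [digitBlock, List.length_append, List.length_replicate,
      List.length_singleton]
    have := hmv j; omega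
  have hXlen : ∀ l : List (Fin n), ((l.map P).flatten).length = l.length * k := by
    intro l
    rw [aux_flatten_length P (fun _ => k) hPlen]
    simp [List.map_const', List.sum_replicate, smul_eq_mul, Nat.mul_comm]
  have hYlen : ∀ l : List (Fin m), ((l.map Q).flatten).length = (l.map mv).sum :=
    aux_flatten_length Q mv hQlen
  have hlen_le_sum : ∀ l : List (Fin m), l.length ≤ (l.map mv).sum := by
    intro l
    have h := List.card_nsmul_le_sum (l.map mv) 1 (by
      intro x hx
      obtain ⟨j, _, rfl⟩ := List.mem_map.mp hx
      exact hmv j)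
    simpa using h
  set M := (Finset.univ : Finset (Fin m)).sup mv with hM
  have hMj : ∀ j, mv j ≤ M := fun j => Finset.le_sup (Finset.mem_univ j)
  have hM1 : 1 ≤ M := le_trans (hmv ⟨0, hm⟩) (hMj ⟨0, hm⟩)
  set B := t * M with hB
  refine Set.Finite.subset
    (Set.Finite.image
      (f := fun p : List (Fin n) × List (Fin m) =>
        List.zipWith (· + ·) (p.1.map P).flatten (p.2.map Q).flatten)
      (Set.Finite.prod (List.finite_length_le (Fin n) B)
        (List.finite_length_le (Fin m) B))) ?_
  rintro w ⟨⟨is, js, hisne, hjsne, hlis, hljs, hwe⟩, hprim⟩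
  -- the list of Q-indices has length at most t
  have hjt : js.length ≤ t := by
    by_contra hgt
    push_neg at hgt
    have hjs1len : (js.take t).length = t := List.length_take_of_le hgt.le
    -- divisibility of the length of the first t Q-blocks
    have hdiv : k ∣ ((js.take t).map mv).sum := by
      have hm2 := hmul (fun s : Fin t => (js.take t).get (Fin.cast hjs1len.symm s))
      have he :
          (∑ s : Fin t, mv ((js.take t).get (Fin.cast hjs1len.symm s)))
            = ∑ i : Fin (js.take t).length, mv ((js.take t).get i) :=
        Fintype.sum_equiv (finCongr hjs1len.symm)
          (fun s => mv ((js.take t).get (Fin.cast hjs1len.symm s)))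
          (fun i => mv ((js.take t).get i)) (fun s => rfl)
      rw [aux_sum_map_fin, ← he]
      exact hm2
    obtain ⟨p₁, hp₁⟩ := hdiv
    have hsum_split : (js.map mv).sum = ((js.take t).map mv).sum + ((js.drop t).map mv).sum := by
      conv_lhs => rw [← List.take_append_drop t js]
      rw [List.map_append, List.sum_append]
    have hL : (js.map mv).sum = w.length := by rw [← hYlen]; exact hljs
    have hLP : is.length * k = w.length := by rw [← hXlen]; exact hlis
    have h1pos : 0 < ((js.take t).map mv).sum :=
      lt_of_lt_of_le (by omega) (hjs1len ▸ hlen_le_sum (js.take t))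
    have h2pos : 0 < ((js.drop t).map mv).sum := by
      refine lt_of_lt_of_le ?_ (hlen_le_sum (js.drop t))
      rw [List.length_drop]; omega
    have hlt : k * p₁ < w.length := by omega
    have hp1pos : 0 < p₁ := by
      rcases Nat.eq_zero_or_pos p₁ with h0 | h
      · rw [h0, Nat.mul_zero] at hp₁; omega
      · exact h
    have hp1lt : p₁ < is.length := by
      by_contra hle
      push_neg at hle
      have h2 : is.length * k ≤ p₁ * k := Nat.mul_le_mul_right k hle
      rw [Nat.mul_comm p₁ k] at h2
      omega
    have his1len : (is.take p₁).length = p₁ := List.length_take_of_le hp1lt.le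
    have hA : (((is.take p₁).map P).flatten).length = k * p₁ := by
      rw [hXlen, his1len, Nat.mul_comm]
    have hL1 : (((js.take t).map Q).flatten).length = k * p₁ := by
      rw [hYlen]; exact hp₁
    have hXsplit : (is.map P).flatten
        = ((is.take p₁).map P).flatten ++ ((is.drop p₁).map P).flatten := by
      conv_lhs => rw [← List.take_append_drop p₁ is]
      rw [List.map_append, List.flatten_append]
    have hYsplit : (js.map Q).flatten
        = ((js.take t).map Q).flatten ++ ((js.drop t).map Q).flatten := by
      conv_lhs => rw [← List.take_append_drop t js]
      rw [List.map_append, List.flatten_append]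
    have hwt : w.take (k * p₁)
        = List.zipWith (· + ·) ((is.take p₁).map P).flatten ((js.take t).map Q).flatten := by
      rw [hwe, List.take_zipWith, hXsplit, hYsplit, List.take_left' hA, List.take_left' hL1]
    have hwd : w.drop (k * p₁)
        = List.zipWith (· + ·) ((is.drop p₁).map P).flatten ((js.drop t).map Q).flatten := by
      rw [hwe, List.drop_zipWith, hXsplit, hYsplit, List.drop_left' hA, List.drop_left' hL1]
    have hulen : (w.take (k * p₁)).length = k * p₁ := by
      rw [List.length_take]; omega
    have hvlen : (w.drop (k * p₁)).length = w.length - k * p₁ := List.length_drop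
    have hBlen : (((is.drop p₁).map P).flatten).length = w.length - k * p₁ := by
      rw [hXlen, List.length_drop, Nat.sub_mul, hLP, Nat.mul_comm]
    have hClen : (((js.drop t).map Q).flatten).length = w.length - k * p₁ := by
      rw [hYlen]; omega
    have hkp1 : 0 < k * p₁ := Nat.mul_pos hk hp1pos
    refine hprim ⟨w.take (k * p₁), w.drop (k * p₁), ?_, ?_, ?_, ?_, (List.take_append_drop _ w).symm⟩
    · exact List.ne_nil_of_length_pos (by omega)
    · exact List.ne_nil_of_length_pos (by omega)
    · exact ⟨is.take p₁, js.take t,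
        List.ne_nil_of_length_pos (by omega),
        List.ne_nil_of_length_pos (by omega),
        by rw [hA, hulen], by rw [hL1, hulen], hwt⟩
    · exact ⟨is.drop p₁, js.drop t,
        List.ne_nil_of_length_pos (by rw [List.length_drop]; omega),
        List.ne_nil_of_length_pos (by rw [List.length_drop]; omega),
        by rw [hBlen, hvlen], by rw [hClen, hvlen], hwd⟩
  -- now bound lengths
  have hL : (js.map mv).sum = w.length := by rw [← hYlen]; exact hljs
  have hLP : is.length * k = w.length := by rw [← hXlen]; exact hlis
  have hsum_le : (js.map mv).sum ≤ js.length * M := by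
    have h := List.sum_le_card_nsmul (js.map mv) M (by
      intro x hx
      obtain ⟨j, _, rfl⟩ := List.mem_map.mp hx
      exact hMj j)
    simpa [smul_eq_mul] using h
  have hwB : w.length ≤ B := by
    calc w.length = (js.map mv).sum := hL.symm
      _ ≤ js.length * M := hsum_le
      _ ≤ t * M := Nat.mul_le_mul_right M hjt
  refine ⟨(is, js), ⟨?_, ?_⟩, hwe.symm⟩
  · have h1 : is.length ≤ is.length * k := Nat.le_mul_of_pos_right is.length hk
    simp only [Set.mem_setOf_eq]
    omega
  · have h2 : t ≤ t * M := Nat.le_mul_of_pos_right t hM1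
    simp only [Set.mem_setOf_eq]
    omega
end

section
/- Suppose there exists a positive integer k such that n = m, n_1 = ⋯ = n_{n−1} = k and n_n = 2k, and m_1 = ⋯ = m_{m−1} = k and m_m = 2k (i.e. both D₁ and D₂ consist of blocks of length k except the last block, which has length 2k). Then the set C is countable. -/
open Finset Pointwise

namespace St10

def psum (W : ℕ → List ℝ) (t : ℕ) : ℕ := ∑ s ∈ Finset.range t, (W s).length

lemma psum_zero (W : ℕ → List ℝ) : psum W 0 = 0 := rfl

lemma psum_succ (W : ℕ → List ℝ) (t : ℕ) : psum W (t+1) = psum W t + (W t).length :=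
  Finset.sum_range_succ _ _

lemma psum_mono (W : ℕ → List ℝ) : Monotone (psum W) := by
  intro s t hst
  exact Finset.sum_le_sum_of_subset (Finset.range_subset_range.2 hst)

lemma le_psum {W : ℕ → List ℝ} (hW : ∀ t, W t ≠ []) : ∀ t, t ≤ psum W t := by
  intro t
  induction t with
  | zero => simp [psum_zero]
  | succ t ih =>
    rw [psum_succ]
    have : 1 ≤ (W t).length := List.length_pos_iff.2 (hW t)
    omega

lemma locate {W : ℕ → List ℝ} (hW : ∀ t, W t ≠ []) (j : ℕ) :
    ∃ t, psum W t ≤ j ∧ j < psum W (t+1) := by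
  classical
  set Pr : ℕ → Prop := fun t => psum W t ≤ j with hPr
  set t := Nat.findGreatest Pr (j+1) with ht
  have h0 : Pr 0 := by simp [hPr, psum_zero]
  have hspec : Pr t := Nat.findGreatest_spec (P := Pr) (Nat.zero_le _) h0
  refine ⟨t, hspec, ?_⟩
  by_contra hcon
  push_neg at hcon
  have h1 : t + 1 ≤ j + 1 := by
    have := le_psum hW (t+1)
    omega
  have h2 : Pr (t+1) := hcon
  have h3 := Nat.le_findGreatest (P := Pr) h1 h2
  rw [← ht] at h3
  omega

lemma concat_val {W : ℕ → List ℝ} {x : ℕ → ℝ} (h : IsConcatSeq W x)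
    {t j : ℕ} (h1 : psum W t ≤ j) (h2 : j < psum W (t+1)) :
    ∃ hij : j - psum W t < (W t).length, x j = (W t).get ⟨j - psum W t, hij⟩ := by
  have hlen : j - psum W t < (W t).length := by
    have := psum_succ W t; omega
  refine ⟨hlen, ?_⟩
  have key := h.2 t ⟨j - psum W t, hlen⟩
  rw [show (∑ s ∈ Finset.range t, (W s).length) +
      ((⟨j - psum W t, hlen⟩ : Fin (W t).length) : ℕ) = j from by
    show psum W t + (j - psum W t) = j
    omega] at key
  exact key

lemma val_mem_block {W : ℕ → List ℝ} {x : ℕ → ℝ} (h : IsConcatSeq W x) (j : ℕ) :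
    ∃ t, x j ∈ W t := by
  obtain ⟨t, h1, h2⟩ := locate h.1 j
  obtain ⟨hij, hx⟩ := concat_val h h1 h2
  exact ⟨t, hx ▸ List.get_mem _ _⟩

lemma periodic_of_blocks {W : ℕ → List ℝ} {x : ℕ → ℝ} (h : IsConcatSeq W x)
    (T : ℕ) (B : List ℝ) (hB : B ≠ []) (hWT : ∀ t, T ≤ t → W t = B) :
    ∀ j, psum W T ≤ j → x (j + B.length) = x j := by
  intro j hj
  obtain ⟨t, h1, h2⟩ := locate h.1 j
  have hTt : T ≤ t := by
    by_contra hc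
    push_neg at hc
    have := psum_mono W (show t + 1 ≤ T by omega)
    omega
  have hWt : W t = B := hWT t hTt
  have hWt1 : W (t+1) = B := hWT (t+1) (by omega)
  obtain ⟨hij, hx⟩ := concat_val h h1 h2
  have hps : psum W (t+1) = psum W t + B.length := by rw [psum_succ, hWt]
  have hij' : j - psum W t < (W (t+1)).length := by rw [hWt1, ← hWt]; exact hij
  have key := h.2 (t+1) ⟨j - psum W t, hij'⟩
  rw [show (∑ s ∈ Finset.range (t+1), (W s).length) +
      ((⟨j - psum W t, hij'⟩ : Fin (W (t+1)).length) : ℕ) = j + B.length from by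
    show psum W (t+1) + (j - psum W t) = j + B.length
    omega] at key
  rw [key, hx]
  simp only [List.get_eq_getElem, hWt, hWt1]

lemma flatten_len {W : ℕ → List ℝ} :
    ∀ (d t : ℕ), psum W t + ((List.range' t d).map W).flatten.length = psum W (t+d) := by
  intro d
  induction d with
  | zero => simp
  | succ d ih =>
    intro t
    rw [List.range'_succ]
    simp only [List.map_cons, List.flatten_cons, List.length_append]
    have h1 := ih (t+1)
    have h2 := psum_succ W t
    have h3 : t + 1 + d = t + (d+1) := by omega
    rw [h3] at h1
    omega

lemma flatten_get {W : ℕ → List ℝ} {x : ℕ → ℝ} (h : IsConcatSeq W x) :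
    ∀ (d t : ℕ) (i : ℕ) (hi : i < ((List.range' t d).map W).flatten.length),
      ((List.range' t d).map W).flatten[i] = x (psum W t + i) := by
  intro d
  induction d with
  | zero => intro t i hi; simp at hi
  | succ d ih =>
    intro t i hi
    have heq : ((List.range' t (d+1)).map W).flatten =
        (W t) ++ ((List.range' (t+1) d).map W).flatten := by
      rw [List.range'_succ]; simp
    have hi2 : i < ((W t) ++ ((List.range' (t+1) d).map W).flatten).length := heq ▸ hi
    rw [List.getElem_of_eq heq hi, List.getElem_append]
    split
    · next h' =>
      have key := h.2 t ⟨i, h'⟩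
      rw [show (∑ s ∈ Finset.range t, (W s).length) +
          ((⟨i, h'⟩ : Fin (W t).length) : ℕ) = psum W t + i from rfl] at key
      exact key.symm
    · next h' =>
      push_neg at h'
      have hi3 : i - (W t).length < ((List.range' (t+1) d).map W).flatten.length := by
        simp only [List.length_append] at hi2
        omega
      rw [ih (t+1) (i - (W t).length) hi3, psum_succ]
      congr 1
      omega

lemma flatten_eq_ofFn {W : ℕ → List ℝ} {x : ℕ → ℝ} (h : IsConcatSeq W x) (d t : ℕ) :
    ((List.range' t d).map W).flatten =
      List.ofFn (fun i : Fin (((List.range' t d).map W).flatten.length) => x (psum W t + i)) := by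
  apply List.ext_getElem
  · simp
  · intro i h1 h2
    rw [flatten_get h d t i h1, List.getElem_ofFn]

lemma ofFn_add_zipWith (l : ℕ) (f g : Fin l → ℝ) :
    List.ofFn (fun i => f i + g i) = List.zipWith (· + ·) (List.ofFn f) (List.ofFn g) := by
  apply List.ext_getElem
  · simp
  · intro i h1 h2
    simp [List.getElem_zipWith]


lemma steps_le {α : ℕ → ℕ} (hα0 : α 0 = 0)
    (hα : ∀ t, α (t+1) = α t + 1 ∨ α (t+1) = α t + 2) : ∀ t, t ≤ α t := by
  intro t; induction t with
  | zero => omega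
  | succ t ih => rcases hα t with h|h <;> omega

lemma meets {α : ℕ → ℕ} (hα0 : α 0 = 0)
    (hα : ∀ t, α (t+1) = α t + 1 ∨ α (t+1) = α t + 2) (c : ℕ) :
    ∃ t, α t = c ∨ α t = c + 1 := by
  classical
  set Pr : ℕ → Prop := fun t => α t ≤ c with hPr
  set t := Nat.findGreatest Pr (c+1) with ht
  have h0 : Pr 0 := by simp [hPr, hα0]
  have hspec : Pr t := Nat.findGreatest_spec (P := Pr) (Nat.zero_le _) h0
  have hnext : ¬ Pr (t+1) := by
    intro hco
    have hle : t + 1 ≤ α (t+1) := steps_le hα0 hα (t+1)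
    have hco' : α (t+1) ≤ c := hco
    have h1 : t + 1 ≤ c + 1 := by omega
    have h3 := Nat.le_findGreatest (P := Pr) h1 hco
    rw [← ht] at h3; omega
  have hspec' : α t ≤ c := hspec
  have hnext' : ¬ α (t+1) ≤ c := hnext
  rcases hα t with h|h
  · exact ⟨t, by omega⟩
  · rcases Nat.lt_or_ge (α t) c with h2|h2
    · exact ⟨t+1, by omega⟩
    · exact ⟨t, by omega⟩

lemma comb {α γ : ℕ → ℕ} (hα0 : α 0 = 0) (hγ0 : γ 0 = 0)
    (hα : ∀ t, α (t+1) = α t + 1 ∨ α (t+1) = α t + 2)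
    (hγ : ∀ t, γ (t+1) = γ t + 1 ∨ γ (t+1) = γ t + 2)
    (M : ℕ) (hM : ∀ t u, α t = γ u → α t ≤ M) :
    ∀ t, M + 2 ≤ t → α (t+1) = α t + 2 := by
  obtain ⟨t0, ht0⟩ := meets hα0 hα (M+1)
  set c0 := α t0 with hc0
  have hc0M : M < c0 := by omega
  have hc0le : c0 ≤ M + 2 := by omega
  have hc0r : c0 ∈ Set.range α := ⟨t0, rfl⟩
  have main : ∀ d, (c0 + 2*d ∈ Set.range α) ∧ (c0 + 2*d + 1 ∈ Set.range γ) := by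
    intro d; induction d with
    | zero =>
      refine ⟨by simpa using hc0r, ?_⟩
      have hno : c0 ∉ Set.range γ := by
        rintro ⟨u, hu⟩
        have := hM t0 u (by omega)
        omega
      obtain ⟨u, hu⟩ := meets hγ0 hγ c0
      rcases hu with h|h
      · exact absurd ⟨u, h⟩ hno
      · exact ⟨u, by omega⟩
    | succ d ih =>
      obtain ⟨⟨t1, ht1⟩, ⟨u1, hu1⟩⟩ := ih
      have hnoα : c0 + 2*d + 1 ∉ Set.range α := by
        rintro ⟨t2, ht2⟩
        have := hM t2 u1 (by omega)
        omega
      obtain ⟨t2, ht2⟩ := meets hα0 hα (c0 + 2*d + 1)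
      have hα2 : c0 + 2*d + 2 ∈ Set.range α := by
        rcases ht2 with h|h
        · exact absurd ⟨t2, h⟩ hnoα
        · exact ⟨t2, by omega⟩
      obtain ⟨t3, ht3⟩ := hα2
      have hnoγ : c0 + 2*d + 2 ∉ Set.range γ := by
        rintro ⟨u2, hu2⟩
        have := hM t3 u2 (by omega)
        omega
      obtain ⟨u2, hu2⟩ := meets hγ0 hγ (c0 + 2*d + 2)
      have hγ3 : c0 + 2*d + 3 ∈ Set.range γ := by
        rcases hu2 with h|h
        · exact absurd ⟨u2, h⟩ hnoγ
        · exact ⟨u2, by omega⟩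
      constructor
      · exact ⟨t3, by omega⟩
      · obtain ⟨u3, hu3⟩ := hγ3
        exact ⟨u3, by omega⟩
  intro t ht
  have htα : c0 ≤ α t := by
    have := steps_le hα0 hα t
    omega
  obtain ⟨d, hd⟩ : ∃ d, α t = c0 + 2*d ∨ α t = c0 + 2*d + 1 :=
    ⟨(α t - c0)/2, by omega⟩
  have hd2 : α t = c0 + 2*d := by
    rcases hd with h|h
    · exact h
    · exfalso
      obtain ⟨u1, hu1⟩ := (main d).2
      have := hM t u1 (by omega)
      omega
  rcases hα t with h|h
  · exfalso
    obtain ⟨u1, hu1⟩ := (main d).2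
    have := hM (t+1) u1 (by omega)
    omega
  · exact h

lemma countable_eventually_periodic {F : Set ℝ} (hF : F.Countable) (p : ℕ) (hp : 0 < p) :
    {a : ℕ → ℝ | (∀ j, a j ∈ F) ∧ ∃ N, ∀ j, N ≤ j → a (j + p) = a j}.Countable := by
  classical
  have hsub : {a : ℕ → ℝ | (∀ j, a j ∈ F) ∧ ∃ N, ∀ j, N ≤ j → a (j + p) = a j}
      ⊆ ⋃ N : ℕ, {a : ℕ → ℝ | (∀ j, a j ∈ F) ∧ ∀ j, N ≤ j → a (j + p) = a j} := by
    rintro a ⟨h1, N, h2⟩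
    exact Set.mem_iUnion.2 ⟨N, h1, h2⟩
  refine Set.Countable.mono hsub (Set.countable_iUnion fun N => ?_)
  haveI := hF.to_subtype
  set Φ : (Fin (N + p) → F) → (ℕ → ℝ) := fun g j =>
    if h : j < N + p then (g ⟨j, h⟩ : ℝ)
    else (g ⟨N + (j - N) % p, by have := Nat.mod_lt (j - N) hp; omega⟩ : ℝ) with hΦ
  refine Set.Countable.mono ?_ (Set.countable_range Φ)
  rintro a ⟨h1, h2⟩
  refine ⟨fun i => ⟨a i, h1 i⟩, ?_⟩
  have hred : ∀ j, N ≤ j → a j = a (N + (j - N) % p) := by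
    intro j
    induction j using Nat.strong_induction_on with
    | _ j ih =>
      intro hj
      by_cases hcase : j < N + p
      · have h3 : (j - N) % p = j - N := Nat.mod_eq_of_lt (by omega)
        have h4 : N + (j - N) = j := by omega
        rw [h3, h4]
      · push_neg at hcase
        have e2 : a ((j - p) + p) = a (j - p) := h2 _ (by omega)
        have e3 : (j - p) + p = j := by omega
        rw [e3] at e2
        have e4 := ih (j - p) (by omega) (by omega)
        have e5 : (j - p - N) % p = (j - N) % p := by
          have h6 : j - N = (j - p - N) + p := by omega
          rw [h6, Nat.add_mod_right]
        rw [e2, e4, e5]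
  funext j
  simp only [hΦ]
  split
  · rfl
  · next hh =>
    push_neg at hh
    exact (hred j (by omega)).symm


end St10

/-- if both digital sets consist of blocks of length `k` except for the last
block, which has length `2k`, then the set `C` is countable. -/
theorem statement10 (β : ℝ) (hβ : 1 < β) (n : ℕ) (hn : 0 < n)
    (k : ℕ) (hk : 0 < k)
    (nv : Fin n → ℕ) (a : Fin n → ℝ)
    (mv : Fin n → ℕ) (b : Fin n → ℝ)
    (hnv : ∀ i : Fin n, nv i = if (i : ℕ) = n - 1 then 2 * k else k)
    (hmv : ∀ j : Fin n, mv j = if (j : ℕ) = n - 1 then 2 * k else k)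
    (P : Fin n → List ℝ) (Q : Fin n → List ℝ)
    (hP : P = fun i => digitBlock β (nv i) (a i))
    (hQ : Q = fun j => digitBlock β (mv j) (b j)) :
    (Cset P Q).Countable := by
  classical
  have hnv1 : ∀ i : Fin n, nv i = k ∨ nv i = 2 * k := by
    intro i
    by_cases h : (i : ℕ) = n - 1
    · right; rw [hnv i, if_pos h]
    · left; rw [hnv i, if_neg h]
  have hmv1 : ∀ i : Fin n, mv i = k ∨ mv i = 2 * k := by
    intro i
    by_cases h : (i : ℕ) = n - 1
    · right; rw [hmv i, if_pos h]
    · left; rw [hmv i, if_neg h]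
  have hPlen : ∀ i, (P i).length = nv i := by
    intro i
    rw [hP]
    simp only [digitBlock, List.length_append, List.length_replicate, List.length_cons,
      List.length_nil]
    rcases hnv1 i with h|h <;> omega
  have hQlen : ∀ i, (Q i).length = mv i := by
    intro i
    rw [hQ]
    simp only [digitBlock, List.length_append, List.length_replicate, List.length_cons,
      List.length_nil]
    rcases hmv1 i with h|h <;> omega
  have hPne : ∀ i, P i ≠ [] := by
    intro i
    have h0 : 0 < (P i).length := by rw [hPlen]; rcases hnv1 i with h|h <;> omega
    exact List.length_pos_iff.mp h0
  have hQne : ∀ i, Q i ≠ [] := by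
    intro i
    have h0 : 0 < (Q i).length := by rw [hQlen]; rcases hmv1 i with h|h <;> omega
    exact List.length_pos_iff.mp h0
  set Fx : Finset ℝ := Finset.univ.biUnion (fun i : Fin n => (P i).toFinset) with hFxdef
  set Fy : Finset ℝ := Finset.univ.biUnion (fun j : Fin n => (Q j).toFinset) with hFydef
  have hFcnt : ((Fx + Fy : Finset ℝ) : Set ℝ).Countable := (Fx + Fy).countable_toSet
  refine Set.Countable.mono ?_
    (St10.countable_eventually_periodic hFcnt (2 * k) (by omega))
  rintro a' ⟨⟨x, y, ⟨W, hWmem, hWc⟩, ⟨V, hVmem, hVc⟩, hxy⟩, N, hN⟩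
  constructor
  · intro j
    obtain ⟨t, hxt⟩ := St10.val_mem_block hWc j
    obtain ⟨u, hyt⟩ := St10.val_mem_block hVc j
    obtain ⟨i, hi⟩ := hWmem t
    obtain ⟨i', hi'⟩ := hVmem u
    have hx' : x j ∈ Fx := by
      refine Finset.mem_biUnion.2 ⟨i, Finset.mem_univ i, List.mem_toFinset.2 ?_⟩
      rw [hi]; exact hxt
    have hy' : y j ∈ Fy := by
      refine Finset.mem_biUnion.2 ⟨i', Finset.mem_univ i', List.mem_toFinset.2 ?_⟩
      rw [hi']; exact hyt
    rw [hxy j]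
    exact Finset.mem_coe.2 (Finset.add_mem_add hx' hy')
  -- periodicity part
  have hlenW : ∀ t, (W t).length = k ∨ (W t).length = 2 * k := by
    intro t
    obtain ⟨i, hi⟩ := hWmem t
    rw [← hi, hPlen i]; exact hnv1 i
  have hlenV : ∀ t, (V t).length = k ∨ (V t).length = 2 * k := by
    intro t
    obtain ⟨i, hi⟩ := hVmem t
    rw [← hi, hQlen i]; exact hmv1 i
  have hbdd : ∃ M, ∀ t u, St10.psum W t = St10.psum V u → St10.psum W t ≤ M := by
    by_contra hcon
    push_neg at hcon
    obtain ⟨t, u, hc1, hc2⟩ := hcon N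
    obtain ⟨t', u', hc1', hc2'⟩ := hcon (St10.psum W t)
    have htt : t < t' := by
      by_contra hle
      push_neg at hle
      have := St10.psum_mono W hle
      omega
    have huu : u < u' := by
      by_contra hle
      push_neg at hle
      have := St10.psum_mono V hle
      omega
    have hl1 := St10.flatten_len (W := W) (t' - t) t
    rw [show t + (t' - t) = t' from by omega] at hl1
    have hl2 := St10.flatten_len (W := V) (u' - u) u
    rw [show u + (u' - u) = u' from by omega] at hl2
    set l := ((List.range' t (t' - t)).map W).flatten.length with hldef
    have hll : ((List.range' u (u' - u)).map V).flatten.length = l := by omega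
    have hl0 : 1 ≤ l := by omega
    apply hN (St10.psum W t) (by omega) l hl0
    have hWmem' : ∀ s, ∃ i, P i = W s := fun s => hWmem s
    choose idxW hidxW using hWmem'
    have hVmem' : ∀ s, ∃ i, Q i = V s := fun s => hVmem s
    choose idxV hidxV using hVmem'
    have hmapW : ((List.range' t (t' - t)).map idxW).map P = (List.range' t (t' - t)).map W := by
      rw [List.map_map]
      exact List.map_congr_left fun s _ => hidxW s
    have hmapV : ((List.range' u (u' - u)).map idxV).map Q = (List.range' u (u' - u)).map V := by
      rw [List.map_map]
      exact List.map_congr_left fun s _ => hidxV s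
    refine ⟨(List.range' t (t' - t)).map idxW, (List.range' u (u' - u)).map idxV, ?_, ?_, ?_, ?_, ?_⟩
    · have hd : t' - t ≠ 0 := by omega
      simp [List.range'_eq_nil_iff, hd]
    · have hd : u' - u ≠ 0 := by omega
      simp [List.range'_eq_nil_iff, hd]
    · rw [hmapW, List.length_ofFn]
      try exact hldef.symm
    · rw [hmapV, List.length_ofFn]
      try exact hll
    · rw [hmapW, hmapV]
      apply List.ext_getElem
      · rw [List.length_ofFn, List.length_zipWith]
        try omega
      · intro i h1 h2
        have h1' : i < l := by rw [List.length_ofFn] at h1; exact h1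
        have hi1 : i < ((List.range' t (t' - t)).map W).flatten.length := by omega
        have hi2 : i < ((List.range' u (u' - u)).map V).flatten.length := by omega
        rw [List.getElem_ofFn, List.getElem_zipWith]
        have g1 := St10.flatten_get hWc (t' - t) t i hi1
        have g2 := St10.flatten_get hVc (u' - u) u i hi2
        rw [g1, g2]
        have hgoal : a' (St10.psum W t + i) = x (St10.psum W t + i) + y (St10.psum V u + i) := by
          rw [hc1]
          exact hxy _
        exact hgoal
  obtain ⟨M, hM⟩ := hbdd
  have hdvdW : ∀ t, k ∣ St10.psum W t := by
    intro t
    induction t with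
    | zero => simp [St10.psum_zero]
    | succ t ih =>
      rw [St10.psum_succ]
      rcases hlenW t with h|h <;> rw [h]
      · exact dvd_add ih dvd_rfl
      · exact dvd_add ih (dvd_mul_left k 2)
  have hdvdV : ∀ t, k ∣ St10.psum V t := by
    intro t
    induction t with
    | zero => simp [St10.psum_zero]
    | succ t ih =>
      rw [St10.psum_succ]
      rcases hlenV t with h|h <;> rw [h]
      · exact dvd_add ih dvd_rfl
      · exact dvd_add ih (dvd_mul_left k 2)
  have hstepα : ∀ t, St10.psum W (t+1) / k = St10.psum W t / k + 1 ∨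
      St10.psum W (t+1) / k = St10.psum W t / k + 2 := by
    intro t
    rcases hlenW t with h|h
    · left
      rw [St10.psum_succ, h, Nat.add_div_right _ hk]
    · right
      rw [St10.psum_succ, h, show St10.psum W t + 2 * k = St10.psum W t + k + k from by ring,
        Nat.add_div_right _ hk, Nat.add_div_right _ hk]
  have hstepγ : ∀ t, St10.psum V (t+1) / k = St10.psum V t / k + 1 ∨
      St10.psum V (t+1) / k = St10.psum V t / k + 2 := by
    intro t
    rcases hlenV t with h|h
    · left
      rw [St10.psum_succ, h, Nat.add_div_right _ hk]
    · right
      rw [St10.psum_succ, h, show St10.psum V t + 2 * k = St10.psum V t + k + k from by ring,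
        Nat.add_div_right _ hk, Nat.add_div_right _ hk]
  have h0α : St10.psum W 0 / k = 0 := by rw [St10.psum_zero]; simp
  have h0γ : St10.psum V 0 / k = 0 := by rw [St10.psum_zero]; simp
  have hMα : ∀ t u, St10.psum W t / k = St10.psum V u / k → St10.psum W t / k ≤ M := by
    intro t u h
    have e1 := Nat.div_mul_cancel (hdvdW t)
    have e2 := Nat.div_mul_cancel (hdvdV u)
    have heq : St10.psum W t = St10.psum V u := by rw [← e1, ← e2, h]
    have h3 := hM t u heq
    have h4 := Nat.div_le_self (St10.psum W t) k
    omega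
  have hMγ : ∀ u t, St10.psum V u / k = St10.psum W t / k → St10.psum V u / k ≤ M := by
    intro u t h
    rw [h]; exact hMα t u h.symm
  have hstep2W := St10.comb h0α h0γ hstepα hstepγ M hMα
  have hstep2V := St10.comb h0γ h0α hstepγ hstepα M hMγ
  have hW2 : ∀ t, M + 2 ≤ t → (W t).length = 2 * k := by
    intro t ht
    rcases hlenW t with h|h
    · exfalso
      have e : St10.psum W (t+1) / k = St10.psum W t / k + 1 := by
        rw [St10.psum_succ, h, Nat.add_div_right _ hk]
      have := hstep2W t ht
      omega
    · exact h
  have hV2 : ∀ t, M + 2 ≤ t → (V t).length = 2 * k := by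
    intro t ht
    rcases hlenV t with h|h
    · exfalso
      have e : St10.psum V (t+1) / k = St10.psum V t / k + 1 := by
        rw [St10.psum_succ, h, Nat.add_div_right _ hk]
      have := hstep2V t ht
      omega
    · exact h
  have hne : n - 1 < n := by omega
  have hWB : ∀ t, M + 2 ≤ t → W t = P ⟨n - 1, hne⟩ := by
    intro t ht
    obtain ⟨i, hi⟩ := hWmem t
    have h2 : nv i = 2 * k := by rw [← hPlen i, hi]; exact hW2 t ht
    have h3 : (i : ℕ) = n - 1 := by
      by_contra hcon
      rw [hnv i, if_neg hcon] at h2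
      omega
    rw [← hi]
    congr 1
    exact Fin.ext h3
  have hVB : ∀ t, M + 2 ≤ t → V t = Q ⟨n - 1, hne⟩ := by
    intro t ht
    obtain ⟨i, hi⟩ := hVmem t
    have h2 : mv i = 2 * k := by rw [← hQlen i, hi]; exact hV2 t ht
    have h3 : (i : ℕ) = n - 1 := by
      by_contra hcon
      rw [hmv i, if_neg hcon] at h2
      omega
    rw [← hi]
    congr 1
    exact Fin.ext h3
  have hBxlen : (P ⟨n - 1, hne⟩).length = 2 * k := by
    rw [hPlen, hnv]
    simp
  have hBylen : (Q ⟨n - 1, hne⟩).length = 2 * k := by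
    rw [hQlen, hmv]
    simp
  have hpx := St10.periodic_of_blocks hWc (M + 2) _ (hPne ⟨n - 1, hne⟩) hWB
  rw [hBxlen] at hpx
  have hpy := St10.periodic_of_blocks hVc (M + 2) _ (hQne ⟨n - 1, hne⟩) hVB
  rw [hBylen] at hpy
  refine ⟨max (St10.psum W (M + 2)) (St10.psum V (M + 2)), fun j hj => ?_⟩
  rw [hxy (j + 2 * k), hxy j,
    hpx j (le_trans (le_max_left _ _) hj), hpy j (le_trans (le_max_right _ _) hj)]
end

section
/- In the setting below, the set difference (K₁+K₂) \ E is countable; that is, E equals K₁+K₂ up to a countable set. -/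
open Finset Pointwise

namespace St11

noncomputable def Slen (W : ℕ → List ℝ) (t : ℕ) : ℕ := ∑ s ∈ Finset.range t, (W s).length

lemma Slen_succ (W : ℕ → List ℝ) (t : ℕ) : Slen W (t+1) = Slen W t + (W t).length :=
  Finset.sum_range_succ _ _

lemma Slen_mono (W : ℕ → List ℝ) : Monotone (Slen W) := by
  intro s t h
  exact Finset.sum_le_sum_of_subset (Finset.range_subset_range.2 h)

lemma self_le_Slen {W : ℕ → List ℝ} (h : ∀ t, W t ≠ []) (t : ℕ) : t ≤ Slen W t := by
  induction t with
  | zero => simp [Slen]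
  | succ t ih =>
      have : 1 ≤ (W t).length := List.length_pos_iff.2 (h t)
      rw [Slen_succ]; omega

lemma Slen_strictMono {W : ℕ → List ℝ} (h : ∀ t, W t ≠ []) : StrictMono (Slen W) := by
  apply strictMono_nat_of_lt_succ
  intro t
  have : 1 ≤ (W t).length := List.length_pos_iff.2 (h t)
  rw [Slen_succ]; omega

lemma flatten_range_len (W : ℕ → List ℝ) (T : ℕ) :
    (((List.range T).map W).flatten).length = Slen W T := by
  induction T with
  | zero => simp [Slen]
  | succ T ih => simp [List.range_succ, Slen_succ, ih]

noncomputable def concatFn (W : ℕ → List ℝ) (m : ℕ) : ℝ :=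
  (((List.range (m+1)).map W).flatten).getD m 0

lemma concatFn_spec {W : ℕ → List ℝ} (h : ∀ t, W t ≠ []) : IsConcatSeq W (concatFn W) := by
  refine ⟨h, ?_⟩
  intro t i
  set m : ℕ := Slen W t + i with hm
  show concatFn W m = _
  have htm : t + 1 ≤ m + 1 := by
    have := self_le_Slen h t; omega
  have hsplit : List.range (m+1) = List.range (t+1) ++ (List.range (m - t)).map (fun x => (t+1) + x) := by
    rw [← List.range_add]; congr 1; omega
  rw [concatFn, hsplit, List.map_append, List.flatten_append]
  rw [List.getD_append _ _ _ _ (by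
    rw [flatten_range_len, Slen_succ]
    have := i.2; omega)]
  rw [List.range_succ, List.map_append, List.flatten_append]
  rw [List.getD_append_right _ _ _ _ (by rw [flatten_range_len]; omega)]
  rw [flatten_range_len]
  simp only [hm, Nat.add_sub_cancel_left]
  simp [List.getD_eq_getElem _ _ i.2]

lemma blockEq {W : ℕ → List ℝ} {x : ℕ → ℝ} (hx : IsConcatSeq W x) (t : ℕ) :
    W t = (List.range' (Slen W t) (W t).length).map x := by
  apply List.ext_getElem
  · simp
  · intro i h1 h2
    have := hx.2 t ⟨i, h1⟩
    simp only [List.getElem_map, List.getElem_range']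
    rw [one_mul]
    exact (this).symm

lemma segEq {W : ℕ → List ℝ} {x : ℕ → ℝ} (hx : IsConcatSeq W x) (d t : ℕ) :
    ((List.range' t d).map W).flatten
      = (List.range' (Slen W t) (Slen W (t+d) - Slen W t)).map x := by
  induction d generalizing t with
  | zero => simp
  | succ d ih =>
      rw [List.range'_succ, List.map_cons, List.flatten_cons, ih (t+1), blockEq hx t]
      rw [← List.map_append]
      congr 1
      have h1 : Slen W (t+1) = Slen W t + 1 * (W t).length := by rw [Slen_succ]; ring
      rw [show Slen W (t+1) = Slen W t + 1 * (W t).length from h1, List.range'_append]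
      congr 1
      have h2 : Slen W (t+1) ≤ Slen W (t+1+d) := Slen_mono W (by omega)
      have h3 : Slen W t ≤ Slen W (t+1) := Slen_mono W (by omega)
      have h4 : Slen W (t+1) = Slen W t + (W t).length := Slen_succ W t
      have h5 : t + 1 + d = t + (d+1) := by omega
      rw [← h5]
      omega

lemma zipWith_add_map (x y : ℕ → ℝ) (l : List ℕ) :
    List.zipWith (· + ·) (l.map x) (l.map y) = l.map (fun m => x m + y m) := by
  induction l with
  | nil => simp
  | cons a l ih => simp [ih]

lemma summable_of_bounded {β C : ℝ} (hβ : 1 < β) {x : ℕ → ℝ} (hx : ∀ m, |x m| ≤ C) :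
    Summable (fun m => x m / β ^ (m+1)) := by
  have hβ0 : (0:ℝ) < β := lt_trans one_pos hβ
  have hr0 : (0:ℝ) ≤ 1/β := by positivity
  have hr1 : 1/β < 1 := by rw [div_lt_one hβ0]; exact hβ
  have hg : Summable (fun m : ℕ => (C * (1/β)) * (1/β)^m) :=
    (summable_geometric_of_lt_one hr0 hr1).mul_left _
  have hle : ∀ m : ℕ, |x m / β ^ (m+1)| ≤ (C * (1/β)) * (1/β)^m := by
    intro m
    have h1 : |x m / β^(m+1)| = |x m| * (1/β)^(m+1) := by
      rw [abs_div, abs_of_pos (pow_pos hβ0 _), div_eq_mul_inv, ← inv_pow, one_div]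
    rw [h1, pow_succ]
    calc |x m| * ((1/β)^m * (1/β)) ≤ C * ((1/β)^m * (1/β)) := by
          apply mul_le_mul_of_nonneg_right (hx m) (by positivity)
      _ = (C * (1/β)) * (1/β)^m := by ring
  exact Summable.of_abs (Summable.of_nonneg_of_le (fun m => abs_nonneg _) hle hg)

lemma digitBlock_ne_nil (β : ℝ) (k : ℕ) (a : ℝ) : digitBlock β k a ≠ [] := by
  simp [digitBlock]

lemma length_digitBlock (β : ℝ) {k : ℕ} (hk : 1 ≤ k) (a : ℝ) :
    (digitBlock β k a).length = k := by
  simp [digitBlock]; omega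

lemma getElem_digitBlock (β : ℝ) {k : ℕ} (hk : 1 ≤ k) (a : ℝ) {i : ℕ}
    (hi : i < (digitBlock β k a).length) :
    (digitBlock β k a)[i] = if i = k - 1 then β ^ k * a else 0 := by
  rw [length_digitBlock β hk] at hi
  by_cases h : i = k - 1
  · subst h
    simp only [digitBlock]
    rw [List.getElem_append_right (by simp)]
    simp
  · have hi' : i < k - 1 := by omega
    simp only [digitBlock]
    rw [List.getElem_append_left (by simpa using hi')]
    simp [if_neg h]

lemma exists_block_index {W : ℕ → List ℝ} (h : ∀ t, W t ≠ []) (m : ℕ) :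
    ∃ t i, i < (W t).length ∧ m = Slen W t + i := by
  have hP : ∃ t, m < Slen W (t+1) := ⟨m, by have := self_le_Slen h (m+1); omega⟩
  classical
  let t := Nat.find hP
  have h1 : m < Slen W (t+1) := Nat.find_spec hP
  have h2 : Slen W t ≤ m := by
    rcases Nat.eq_zero_or_pos t with h0 | h0
    · simp [h0, Slen]
    · have := Nat.find_min hP (m := t - 1) (by omega)
      have ht : t - 1 + 1 = t := by omega
      rw [ht] at this; omega
  refine ⟨t, m - Slen W t, ?_, by omega⟩
  have := Slen_succ W t
  omega

lemma concat_digit_val {β : ℝ} {L : ℕ → ℕ} (hL : ∀ t, 1 ≤ L t) {A : ℕ → ℝ}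
    {W : ℕ → List ℝ} (hW : W = fun t => digitBlock β (L t) (A t))
    {x : ℕ → ℝ} (hx : IsConcatSeq W x) :
    ∀ t i, i < L t → x (Slen W t + i) = if i = L t - 1 then β ^ (L t) * A t else 0 := by
  have hlen : ∀ t, (W t).length = L t := fun t => by rw [hW]; exact length_digitBlock β (hL t) _
  intro t i hi
  have h2 : x (Slen W t + i) = (W t)[i]'(by rw [hlen]; exact hi) := by
    have := hx.2 t ⟨i, by rw [hlen]; exact hi⟩
    simpa [Slen] using this
  rw [h2]
  have : (W t)[i]'(by rw [hlen]; exact hi)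
      = (digitBlock β (L t) (A t))[i]'(by
          rw [show digitBlock β (L t) (A t) = W t by rw [hW], hlen]; exact hi) := by
    congr 1
    rw [hW]
  rw [this, getElem_digitBlock β (hL t) _ _]

/-- Value of a concatenation of digit blocks. -/
lemma seqVal_concat {β : ℝ} (hβ : 1 < β) {L : ℕ → ℕ} (hL : ∀ t, 1 ≤ L t) {A : ℕ → ℝ}
    {W : ℕ → List ℝ} (hW : W = fun t => digitBlock β (L t) (A t))
    {x : ℕ → ℝ} (hx : IsConcatSeq W x) :
    seqVal β x = ∑' t, A t / β ^ (Slen W t) := by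
  have hβ0 : (0:ℝ) < β := lt_trans one_pos hβ
  have hne : ∀ t, W t ≠ [] := fun t => by rw [hW]; exact digitBlock_ne_nil _ _ _
  have hlen : ∀ t, (W t).length = L t := fun t => by rw [hW]; exact length_digitBlock β (hL t) _
  set f : ℕ → ℝ := fun m => x m / β ^ (m+1) with hf
  set g : ℕ → ℕ := fun t => Slen W (t+1) - 1 with hg
  have hmono : StrictMono g := by
    intro s t hst
    have h1 := Slen_strictMono hne (Nat.succ_lt_succ hst)
    have h2 := self_le_Slen hne (s+1)
    simp only [Nat.succ_eq_add_one] at h1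
    simp only [hg]; omega
  have hxval := concat_digit_val hL hW hx
  have hsupp : Function.support f ⊆ Set.range g := by
    intro m hm
    obtain ⟨t, i, hi, hmi⟩ := exists_block_index hne m
    rw [hlen] at hi
    by_cases hend : i = L t - 1
    · refine ⟨t, ?_⟩
      simp only [hg, Slen_succ, hlen]
      have := hL t; omega
    · exfalso
      apply hm
      simp only [hf, hmi, hxval t i hi, if_neg hend, zero_div]
  have key := Function.Injective.tsum_eq hmono.injective hsupp (f := f)
  have hfg : ∀ t, f (g t) = A t / β ^ (Slen W t) := by
    intro t
    have h1 : Slen W (t+1) = Slen W t + L t := by rw [Slen_succ, hlen]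
    have h2 : g t = Slen W t + (L t - 1) := by simp only [hg]; have := hL t; omega
    have h3 : Slen W t + (L t - 1) + 1 = Slen W t + L t := by have := hL t; omega
    simp only [hf, h2]
    rw [hxval t _ (by have := hL t; omega), if_pos rfl, h3, pow_add,
      div_eq_div_iff (by positivity) (by positivity)]
    ring
  rw [seqVal, ← key]
  exact tsum_congr hfg

lemma abs_concat_digit_le {β : ℝ} (hβ : 1 < β) {n : ℕ} (a : Fin n → ℝ) (ha : ∀ i, 0 ≤ a i)
    (nv : Fin n → ℕ) (hnv1 : ∀ i, 1 ≤ nv i) (σ : ℕ → Fin n)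
    {W : ℕ → List ℝ} (hW : W = fun t => digitBlock β (nv (σ t)) (a (σ t)))
    {x : ℕ → ℝ} (hx : IsConcatSeq W x) :
    ∀ m, |x m| ≤ ∑ i, β ^ (nv i) * a i := by
  intro m
  have hβ0 : (0:ℝ) < β := lt_trans one_pos hβ
  have hne : ∀ t, W t ≠ [] := fun t => by rw [hW]; exact digitBlock_ne_nil _ _ _
  have hlen : ∀ t, (W t).length = nv (σ t) := fun t => by
    rw [hW]; exact length_digitBlock β (hnv1 _) _
  obtain ⟨t, i, hi, rfl⟩ := exists_block_index hne m
  rw [hlen] at hi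
  have hnn : ∀ j ∈ Finset.univ, 0 ≤ β ^ (nv j) * a j :=
    fun j _ => mul_nonneg (le_of_lt (pow_pos hβ0 _)) (ha j)
  have hC0 : (0:ℝ) ≤ ∑ i, β ^ (nv i) * a i := Finset.sum_nonneg hnn
  rw [concat_digit_val (fun t => hnv1 (σ t)) hW hx t i hi]
  split
  · rw [abs_of_nonneg (mul_nonneg (le_of_lt (pow_pos hβ0 _)) (ha _))]
    exact Finset.single_le_sum hnn (Finset.mem_univ (σ t))
  · simpa using hC0

lemma attractor_coding {β : ℝ} (hβ : 1 < β) {n : ℕ} (a : Fin n → ℝ) (ha : ∀ i, 0 ≤ a i)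
    (nv : Fin n → ℕ) (hnv : ∀ i, 1 ≤ nv i) {K : Set ℝ} (hKc : IsCompact K)
    (hK : K = ⋃ i, (fun x => x / β ^ nv i + a i) '' K) {z : ℝ} (hz : z ∈ K) :
    ∃ σ : ℕ → Fin n, z = ∑' t, a (σ t) / β ^ (∑ s ∈ Finset.range t, nv (σ s)) := by
  classical
  have hβ0 : (0:ℝ) < β := lt_trans one_pos hβ
  have step : ∀ w : K, ∃ q : Fin n × K, (q.2 : ℝ) / β ^ nv q.1 + a q.1 = (w : ℝ) := by
    rintro ⟨w, hw⟩
    rw [hK] at hw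
    rcases Set.mem_iUnion.1 hw with ⟨i, w', hw', hww⟩
    have hw'K : w' ∈ K := hw'
    exact ⟨⟨i, ⟨w', hw'K⟩⟩, hww⟩
  choose F hF using step
  let p : ℕ → K := fun t => Nat.rec ⟨z, hz⟩ (fun _ w => (F w).2) t
  let σ : ℕ → Fin n := fun t => (F (p t)).1
  have hp0' : p 0 = ⟨z, hz⟩ := rfl
  have hp0 : (p 0).1 = z := by rw [hp0']
  have hrec : ∀ t, (p (t+1)).1 / β ^ nv (σ t) + a (σ t) = (p t).1 := fun t => hF (p t)
  set S : ℕ → ℕ := fun t => ∑ s ∈ Finset.range t, nv (σ s) with hS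
  have hSsucc : ∀ t, S (t+1) = S t + nv (σ t) := fun t => Finset.sum_range_succ _ _
  have hSt : ∀ t, t ≤ S t := by
    intro t
    induction t with
    | zero => simp [hS]
    | succ t ih => rw [hSsucc]; have := hnv (σ t); omega
  refine ⟨σ, ?_⟩
  set f : ℕ → ℝ := fun t => a (σ t) / β ^ (S t) with hf
  have hpartial : ∀ T, z = ∑ t ∈ Finset.range T, f t + (p T).1 / β ^ (S T) := by
    intro T
    induction T with
    | zero => simp [hp0, hS]
    | succ T ih =>
        rw [Finset.sum_range_succ, ih, hSsucc]
        have h1 : (p T).1 = (p (T+1)).1 / β ^ nv (σ T) + a (σ T) := (hrec T).symm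
        simp only [hf]
        rw [h1, pow_add]
        field_simp
        ring
  obtain ⟨C, hC⟩ := isBounded_iff_forall_norm_le.1 hKc.isBounded
  have hC0 : 0 ≤ C := le_trans (norm_nonneg z) (hC z hz)
  set Amax : ℝ := ∑ i, a i with hAmax
  have hAle : ∀ i, a i ≤ Amax := fun i =>
    Finset.single_le_sum (fun j _ => ha j) (Finset.mem_univ i)
  have hA0 : 0 ≤ Amax := Finset.sum_nonneg fun j _ => ha j
  have hr0 : (0:ℝ) ≤ 1/β := by positivity
  have hr1 : 1/β < 1 := by rw [div_lt_one hβ0]; exact hβ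
  have hfle : ∀ t, f t ≤ Amax * (1/β)^t := by
    intro t
    have h1 : (β:ℝ) ^ t ≤ β ^ (S t) := pow_le_pow_right₀ (le_of_lt hβ) (hSt t)
    have h2 : (0:ℝ) < β ^ t := pow_pos hβ0 t
    calc f t ≤ Amax / β ^ t := div_le_div₀ hA0 (hAle _) h2 h1
      _ = Amax * (1/β)^t := by rw [div_pow, one_pow]; ring
  have hsum : Summable f :=
    Summable.of_nonneg_of_le (fun t => div_nonneg (ha _) (le_of_lt (pow_pos hβ0 _))) hfle
      ((summable_geometric_of_lt_one hr0 hr1).mul_left Amax)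
  have hbnd : ∀ T : ℕ, ‖(p T).1 / β ^ (S T)‖ ≤ C * (1/β)^T := by
    intro T
    rw [norm_div, norm_pow, Real.norm_eq_abs β, abs_of_pos hβ0]
    calc ‖(p T).1‖ / β^(S T)
        ≤ C / β^T := div_le_div₀ hC0 (hC _ (p T).2) (pow_pos hβ0 T)
          (pow_le_pow_right₀ hβ.le (hSt T))
      _ = C * (1/β)^T := by rw [div_pow, one_pow]; ring
  have hg0 : Filter.Tendsto (fun T : ℕ => C * (1/β)^T) Filter.atTop (nhds 0) := by
    simpa using (tendsto_pow_atTop_nhds_zero_of_lt_one hr0 hr1).const_mul C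
  have hrem : Filter.Tendsto (fun T => (p T).1 / β ^ (S T)) Filter.atTop (nhds 0) :=
    squeeze_zero_norm hbnd hg0
  have hpart : Filter.Tendsto (fun T => ∑ t ∈ Finset.range T, f t) Filter.atTop (nhds z) := by
    have heq : (fun T => ∑ t ∈ Finset.range T, f t) = fun T => z - (p T).1 / β ^ (S T) := by
      funext T; have := hpartial T; linarith
    rw [heq]
    simpa using (tendsto_const_nhds.sub hrem)
  have h2 := (hsum.hasSum_iff_tendsto_nat).1 hsum.hasSum
  exact (tendsto_nhds_unique h2 hpart).symm

lemma dvd_add_le {k A B : ℕ} (hA : k ∣ A) (hB : k ∣ B) (h : B < A) :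
    B + k ≤ A := by
  obtain ⟨α, rfl⟩ := hA
  obtain ⟨γ, rfl⟩ := hB
  have hlt : γ < α := lt_of_mul_lt_mul_left h (Nat.zero_le k)
  calc k * γ + k = k * (γ + 1) := by ring
    _ ≤ k * α := Nat.mul_le_mul_left k hlt

lemma common_values {k : ℕ} (hk : 0 < k) (Lx Ly : ℕ → ℕ)
    (hLx : ∀ t, Lx t = k ∨ Lx t = 2*k) (hLy : ∀ t, Ly t = k ∨ Ly t = 2*k)
    (hinf : ∀ N, ∃ t, N ≤ t ∧ Lx t = k) (M : ℕ) :
    ∃ c, M < c ∧ (∃ t, (∑ s ∈ Finset.range t, Lx s) = c)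
      ∧ (∃ u, (∑ s ∈ Finset.range u, Ly s) = c) := by
  classical
  set Sx : ℕ → ℕ := fun t => ∑ s ∈ Finset.range t, Lx s with hSx
  set Sy : ℕ → ℕ := fun u => ∑ s ∈ Finset.range u, Ly s with hSy
  have hSxsucc : ∀ t, Sx (t+1) = Sx t + Lx t := fun t => Finset.sum_range_succ _ _
  have hSysucc : ∀ u, Sy (u+1) = Sy u + Ly u := fun u => Finset.sum_range_succ _ _
  have hSxge : ∀ t, t ≤ Sx t := by
    intro t; induction t with
    | zero => simp
    | succ t ih => rw [hSxsucc]; rcases hLx t with h | h <;> omega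
  have hSyge : ∀ u, u ≤ Sy u := by
    intro u; induction u with
    | zero => simp
    | succ u ih => rw [hSysucc]; rcases hLy u with h | h <;> omega
  have hdx : ∀ t, k ∣ Sx t := by
    intro t
    refine Finset.dvd_sum fun s _ => ?_
    rcases hLx s with h | h
    · rw [h]
    · rw [h]; exact dvd_mul_left k 2
  have hdy : ∀ u, k ∣ Sy u := by
    intro u
    refine Finset.dvd_sum fun s _ => ?_
    rcases hLy s with h | h
    · rw [h]
    · rw [h]; exact dvd_mul_left k 2
  obtain ⟨t, htM, htk⟩ := hinf (M + 1)
  have hxM : M < Sx t := lt_of_lt_of_le (by omega) (hSxge t)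
  have hPu : ∃ u, Sx t < Sy (u + 1) := ⟨Sx t, by have := hSyge (Sx t + 1); omega⟩
  set u := Nat.find hPu with hu
  have h1 : Sx t < Sy (u + 1) := Nat.find_spec hPu
  have h2 : Sy u ≤ Sx t := by
    rcases Nat.eq_zero_or_pos u with h0 | h0
    · rw [h0]; simp [hSy]
    · have := Nat.find_min hPu (m := u - 1) (by omega)
      have hu1 : u - 1 + 1 = u := by omega
      rw [hu1] at this; omega
  rcases eq_or_lt_of_le h2 with heq | hlt
  · exact ⟨Sx t, hxM, ⟨t, rfl⟩, ⟨u, heq⟩⟩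
  · have h3 : Sy u + k ≤ Sx t := dvd_add_le (hdx t) (hdy u) hlt
    have h4 : Sx t + k ≤ Sy (u+1) := dvd_add_le (hdy (u+1)) (hdx t) h1
    have h5 : Sy (u+1) ≤ Sy u + 2*k := by
      rcases hLy u with h | h <;> rw [hSysucc, h] <;> omega
    have h6 : Sy (u+1) = Sx t + k := by omega
    refine ⟨Sx t + k, by omega, ⟨t+1, ?_⟩, ⟨u+1, h6⟩⟩
    have := hSxsucc t
    rw [htk] at this
    exact this

lemma countable_eventuallyConst {α : Type*} [Countable α] :
    {σ : ℕ → α | ∃ N, ∀ t, N ≤ t → σ t = σ N}.Countable := by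
  have heq : {σ : ℕ → α | ∃ N, ∀ t, N ≤ t → σ t = σ N}
      = ⋃ N : ℕ, {σ : ℕ → α | ∀ t, N ≤ t → σ t = σ N} := by
    ext σ; simp [Set.mem_iUnion]
  rw [heq]
  apply Set.countable_iUnion
  intro N
  rw [← Set.countable_coe_iff]
  have hinj : Function.Injective
      (fun σ : {σ : ℕ → α | ∀ t, N ≤ t → σ t = σ N} => (fun i : Fin (N+1) => σ.1 i)) := by
    rintro ⟨σ, hσ⟩ ⟨σ', hσ'⟩ h
    have hfun : ∀ i : Fin (N+1), σ i = σ' i := fun i => congrFun h i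
    apply Subtype.ext
    funext t
    by_cases ht : t ≤ N
    · exact hfun ⟨t, by omega⟩
    · have hN : σ N = σ' N := hfun ⟨N, by omega⟩
      show σ t = σ' t
      rw [hσ t (by omega), hσ' t (by omega), hN]
  exact hinj.countable

lemma mem_Eset_of_common {β : ℝ} (hβ : 1 < β) {n : ℕ}
    (a b : Fin n → ℝ) (ha : ∀ i, 0 ≤ a i) (hb : ∀ j, 0 ≤ b j)
    (nv mv : Fin n → ℕ) (hnv1 : ∀ i, 1 ≤ nv i) (hmv1 : ∀ j, 1 ≤ mv j)
    (P Q : Fin n → List ℝ) (hP : P = fun i => digitBlock β (nv i) (a i))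
    (hQ : Q = fun j => digitBlock β (mv j) (b j))
    (σ τ : ℕ → Fin n)
    (hcom : ∀ M : ℕ, ∃ c, M < c ∧ (∃ t, (∑ s ∈ Finset.range t, nv (σ s)) = c)
        ∧ (∃ u, (∑ s ∈ Finset.range u, mv (τ s)) = c)) :
    (∑' t, a (σ t) / β ^ (∑ s ∈ Finset.range t, nv (σ s)))
      + (∑' t, b (τ t) / β ^ (∑ s ∈ Finset.range t, mv (τ s))) ∈ Eset β P Q := by
  classical
  set Wx : ℕ → List ℝ := fun t => P (σ t) with hWxdef
  set Wy : ℕ → List ℝ := fun t => Q (τ t) with hWydef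
  have hWx' : Wx = fun t => digitBlock β (nv (σ t)) (a (σ t)) := by rw [hWxdef, hP]
  have hWy' : Wy = fun t => digitBlock β (mv (τ t)) (b (τ t)) := by rw [hWydef, hQ]
  have hnex : ∀ t, Wx t ≠ [] := fun t => by rw [hWx']; exact digitBlock_ne_nil _ _ _
  have hney : ∀ t, Wy t ≠ [] := fun t => by rw [hWy']; exact digitBlock_ne_nil _ _ _
  set x : ℕ → ℝ := concatFn Wx with hxdef
  set y : ℕ → ℝ := concatFn Wy with hydef
  have hxc : IsConcatSeq Wx x := concatFn_spec hnex
  have hyc : IsConcatSeq Wy y := concatFn_spec hney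
  have hSx : ∀ t, Slen Wx t = ∑ s ∈ Finset.range t, nv (σ s) := fun t =>
    Finset.sum_congr rfl fun s _ => by rw [hWx']; exact length_digitBlock β (hnv1 _) _
  have hSy : ∀ u, Slen Wy u = ∑ s ∈ Finset.range u, mv (τ s) := fun u =>
    Finset.sum_congr rfl fun s _ => by rw [hWy']; exact length_digitBlock β (hmv1 _) _
  -- pick increasing common points
  have pick : ∀ tu : ℕ × ℕ, ∃ tu' : ℕ × ℕ,
      tu.1 < tu'.1 ∧ tu.2 < tu'.2 ∧ Slen Wx tu'.1 = Slen Wy tu'.2 := by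
    intro tu
    obtain ⟨c, hc, ⟨t', ht'⟩, ⟨u', hu'⟩⟩ := hcom (max (Slen Wx tu.1) (Slen Wy tu.2))
    rw [← hSx t'] at ht'
    rw [← hSy u'] at hu'
    refine ⟨(t', u'), ?_, ?_, by rw [ht', hu']⟩
    · by_contra h
      push_neg at h
      have h1 : Slen Wx t' ≤ Slen Wx tu.1 := Slen_mono Wx h
      omega
    · by_contra h
      push_neg at h
      have h1 : Slen Wy u' ≤ Slen Wy tu.2 := Slen_mono Wy h
      omega
  choose g hg1 hg2 hg3 using pick
  set p : ℕ → ℕ × ℕ := fun r => g^[r] (0, 0) with hpdef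
  have hpsucc : ∀ r, p (r+1) = g (p r) := fun r => Function.iterate_succ_apply' g r (0,0)
  set tS : ℕ → ℕ := fun r => (p r).1 with htSdef
  set uS : ℕ → ℕ := fun r => (p r).2 with huSdef
  have ht0 : tS 0 = 0 := rfl
  have hu0 : uS 0 = 0 := rfl
  have htmono : ∀ r, tS r < tS (r+1) := fun r => by
    show (p r).1 < (p (r+1)).1
    rw [hpsucc]; exact hg1 (p r)
  have humono : ∀ r, uS r < uS (r+1) := fun r => by
    show (p r).2 < (p (r+1)).2
    rw [hpsucc]; exact hg2 (p r)
  have hinv : ∀ r, Slen Wx (tS r) = Slen Wy (uS r) := by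
    intro r
    cases r with
    | zero => simp [ht0, hu0, Slen]
    | succ r =>
        show Slen Wx (p (r+1)).1 = Slen Wy (p (r+1)).2
        rw [hpsucc]; exact hg3 (p r)
  set c : ℕ → ℕ := fun r => Slen Wx (tS r) with hcdef
  have hcmono : ∀ r, c r < c (r+1) := fun r => Slen_strictMono hnex (htmono r)
  have hc0 : c 0 = 0 := by simp [hcdef, ht0, Slen]
  set z : ℕ → ℝ := fun m => x m + y m with hzdef
  set W : ℕ → List ℝ := fun r => (List.range' (c r) (c (r+1) - c r)).map z with hWdef
  have hlenW : ∀ r, (W r).length = c (r+1) - c r := by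
    intro r; simp [hWdef]
  have hWne : ∀ r, W r ≠ [] := fun r => by
    apply List.ne_nil_of_length_pos
    rw [hlenW]
    have := hcmono r
    omega
  have hSlenW : ∀ r, Slen W r = c r := by
    intro r
    induction r with
    | zero => simp [Slen, hc0]
    | succ r ih =>
        rw [Slen_succ, ih, hlenW]
        have := hcmono r
        omega
  have hWc : IsConcatSeq W z := by
    refine ⟨hWne, ?_⟩
    intro r i
    have hgoal : (W r).get i = z (c r + ↑i) := by
      rw [List.get_eq_getElem]
      simp only [hWdef, List.getElem_map, List.getElem_range', one_mul]
    rw [hgoal]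
    congr 1
    have h := hSlenW r
    simp only [Slen] at h
    omega
  have hflx : ∀ r, (((List.range' (tS r) (tS (r+1) - tS r)).map σ).map P).flatten
      = (List.range' (c r) (c (r+1) - c r)).map x := by
    intro r
    rw [List.map_map]
    have hc : P ∘ σ = Wx := rfl
    rw [hc]
    have hseg := segEq hxc (tS (r+1) - tS r) (tS r)
    rw [show tS r + (tS (r+1) - tS r) = tS (r+1) by have := htmono r; omega] at hseg
    exact hseg
  have hfly : ∀ r, (((List.range' (uS r) (uS (r+1) - uS r)).map τ).map Q).flatten
      = (List.range' (c r) (c (r+1) - c r)).map y := by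
    intro r
    rw [List.map_map]
    have hc : Q ∘ τ = Wy := rfl
    rw [hc]
    have hseg := segEq hyc (uS (r+1) - uS r) (uS r)
    rw [show uS r + (uS (r+1) - uS r) = uS (r+1) by have := humono r; omega] at hseg
    rw [hseg, ← hinv r, ← hinv (r+1)]
  have hmatch : ∀ r, IsMatching P Q (W r) := by
    intro r
    refine ⟨(List.range' (tS r) (tS (r+1) - tS r)).map σ,
      (List.range' (uS r) (uS (r+1) - uS r)).map τ, ?_, ?_, ?_, ?_, ?_⟩
    · apply List.ne_nil_of_length_pos
      simp only [List.length_map, List.length_range']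
      have := htmono r; omega
    · apply List.ne_nil_of_length_pos
      simp only [List.length_map, List.length_range']
      have := humono r; omega
    · rw [hflx r, hlenW]; simp
    · rw [hfly r, hlenW]; simp
    · rw [hflx r, hfly r, zipWith_add_map]
  have hsumx : Summable (fun m => x m / β ^ (m+1)) :=
    summable_of_bounded hβ (abs_concat_digit_le hβ a ha nv hnv1 σ hWx' hxc)
  have hsumy : Summable (fun m => y m / β ^ (m+1)) :=
    summable_of_bounded hβ (abs_concat_digit_le hβ b hb mv hmv1 τ hWy' hyc)
  have hvx : seqVal β x = ∑' t, a (σ t) / β ^ (∑ s ∈ Finset.range t, nv (σ s)) := by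
    rw [seqVal_concat hβ (fun t => hnv1 (σ t)) hWx' hxc]
    exact tsum_congr fun t => by rw [hSx]
  have hvy : seqVal β y = ∑' t, b (τ t) / β ^ (∑ s ∈ Finset.range t, mv (τ s)) := by
    rw [seqVal_concat hβ (fun t => hmv1 (τ t)) hWy' hyc]
    exact tsum_congr fun t => by rw [hSy]
  have hzval : seqVal β z = seqVal β x + seqVal β y := by
    rw [seqVal, seqVal, seqVal, ← Summable.tsum_add hsumx hsumy]
    exact tsum_congr fun m => add_div _ _ _
  refine ⟨z, ⟨W, fun r => hmatch r, hWc⟩, ?_⟩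
  rw [hzval, hvx, hvy]

end St11

/-- in the setting where both IFS's consist of `n-1` maps of ratio `β^{-k}`
and one map of ratio `β^{-2k}` with nonnegative translations, the set `E` equals `K₁+K₂`
up to a countable set. -/
theorem statement11 (β : ℝ) (hβ : 1 < β) (k : ℕ) (hk : 0 < k) (n : ℕ) (hn : 2 ≤ n)
    (a : Fin n → ℝ) (ha : ∀ i, 0 ≤ a i)
    (b : Fin n → ℝ) (hb : ∀ j, 0 ≤ b j)
    (nv : Fin n → ℕ) (mv : Fin n → ℕ)
    (hnv : ∀ i : Fin n, nv i = if (i : ℕ) = n - 1 then 2 * k else k)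
    (hmv : ∀ j : Fin n, mv j = if (j : ℕ) = n - 1 then 2 * k else k)
    (K₁ K₂ : Set ℝ)
    (hK₁ne : K₁.Nonempty) (hK₁c : IsCompact K₁)
    (hK₁ : K₁ = ⋃ i : Fin n, (fun x => x / β ^ nv i + a i) '' K₁)
    (hK₂ne : K₂.Nonempty) (hK₂c : IsCompact K₂)
    (hK₂ : K₂ = ⋃ j : Fin n, (fun x => x / β ^ mv j + b j) '' K₂)
    (P : Fin n → List ℝ) (Q : Fin n → List ℝ)
    (hP : P = fun i => digitBlock β (nv i) (a i))
    (hQ : Q = fun j => digitBlock β (mv j) (b j)) :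
    ((K₁ + K₂) \ Eset β P Q).Countable := by
  classical
  have hnv1 : ∀ i, 1 ≤ nv i := fun i => by rw [hnv]; split <;> omega
  have hmv1 : ∀ j, 1 ≤ mv j := fun j => by rw [hmv]; split <;> omega
  set val1 : (ℕ → Fin n) → ℝ :=
    fun σ => ∑' t, a (σ t) / β ^ (∑ s ∈ Finset.range t, nv (σ s)) with hval1
  set val2 : (ℕ → Fin n) → ℝ :=
    fun τ => ∑' t, b (τ t) / β ^ (∑ s ∈ Finset.range t, mv (τ s)) with hval2
  set Sbad : Set (ℕ → Fin n) := {σ | ∃ N, ∀ t, N ≤ t → σ t = σ N} with hSbad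
  have hF : ((fun pr : (ℕ → Fin n) × (ℕ → Fin n) => val1 pr.1 + val2 pr.2)
      '' (Sbad ×ˢ Sbad)).Countable :=
    ((St11.countable_eventuallyConst).prod St11.countable_eventuallyConst).image _
  apply Set.Countable.mono ?_ hF
  rintro w ⟨hwK, hwE⟩
  rw [Set.mem_add] at hwK
  obtain ⟨z₁, hz₁, z₂, hz₂, hw⟩ := hwK
  obtain ⟨σ, hσ⟩ := St11.attractor_coding hβ a ha nv hnv1 hK₁c hK₁ hz₁
  obtain ⟨τ, hτ⟩ := St11.attractor_coding hβ b hb mv hmv1 hK₂c hK₂ hz₂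
  have hwval : w = val1 σ + val2 τ := by rw [← hw, hσ, hτ]
  by_cases hgood : (∀ N, ∃ t, N ≤ t ∧ nv (σ t) = k) ∨ (∀ N, ∃ t, N ≤ t ∧ mv (τ t) = k)
  · exfalso
    apply hwE
    have hLx : ∀ t, nv (σ t) = k ∨ nv (σ t) = 2*k := by
      intro t; rw [hnv]; split
      · exact Or.inr rfl
      · exact Or.inl rfl
    have hLy : ∀ t, mv (τ t) = k ∨ mv (τ t) = 2*k := by
      intro t; rw [hmv]; split
      · exact Or.inr rfl
      · exact Or.inl rfl
    have hcom : ∀ M : ℕ, ∃ c, M < c ∧ (∃ t, (∑ s ∈ Finset.range t, nv (σ s)) = c)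
        ∧ (∃ u, (∑ s ∈ Finset.range u, mv (τ s)) = c) := by
      rcases hgood with hg | hg
      · exact fun M => St11.common_values hk _ _ hLx hLy hg M
      · intro M
        obtain ⟨c, hc, h2, h1⟩ := St11.common_values hk _ _ hLy hLx hg M
        exact ⟨c, hc, h1, h2⟩
    have hmem := St11.mem_Eset_of_common hβ a b ha hb nv mv hnv1 hmv1 P Q hP hQ σ τ hcom
    rw [hwval]
    exact hmem
  · push_neg at hgood
    obtain ⟨⟨N₁, hN₁⟩, ⟨N₂, hN₂⟩⟩ := hgood
    have hcoord1 : ∀ t, N₁ ≤ t → ((σ t : ℕ) = n - 1) := by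
      intro t ht
      by_contra hc
      have h := hnv (σ t)
      rw [if_neg hc] at h
      exact hN₁ t ht h
    have hcoord2 : ∀ t, N₂ ≤ t → ((τ t : ℕ) = n - 1) := by
      intro t ht
      by_contra hc
      have h := hmv (τ t)
      rw [if_neg hc] at h
      exact hN₂ t ht h
    have hσbad : σ ∈ Sbad :=
      ⟨N₁, fun t ht => Fin.ext (by rw [hcoord1 t ht, hcoord1 N₁ le_rfl])⟩
    have hτbad : τ ∈ Sbad :=
      ⟨N₂, fun t ht => Fin.ext (by rw [hcoord2 t ht, hcoord2 N₂ le_rfl])⟩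
    exact ⟨(σ, τ), ⟨hσbad, hτbad⟩, hwval.symm⟩
end
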